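/- arXiv:2208.05876 — 10 statements merged into one kernel-verified Lean document; each statement's English description precedes it below -/
import Mathlib

section
/- Let 1 ≤ r ≤ ∞ and let f : ℝⁿ × ℝᵐ → ℝ^q be a C^r map with f(x, 0) = 0 for all x ∈ ℝⁿ. Define g̃ : ℝ × ℝⁿ × ℝᵐ → ℝ^q by g̃(τ, x, v) = Σ_{i=1}^{m} vᵢ · ∫_0^1 (∂f/∂vᵢ)(x, s·τ·v) ds. Then: (a) g̃ is C^{r−1}; (b) f(x, τ·v) = τ · g̃(τ, x, v) for all τ ∈ ℝ, x ∈ ℝⁿ, v ∈ ℝᵐ; in particular g̃(1, x, v) = f(x, v) and g̃(τ, x, v) = f(x, τv)/τ for τ ≠ 0; (c) g̃(0, x, v) = Σ_{i=1}^{m} vᵢ · (∂f/∂vᵢ)(x, 0), so for each x the map v ↦ g̃(0, x, v) is linear; (d) for every τ ∈ ℝ, x ∈ ℝⁿ and i = 1,…,m, the partial derivative of g̃ in the variable vᵢ at the point (τ, x, 0) equals (∂f/∂vᵢ)(x, 0). -/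
open MeasureTheory intervalIntegral Metric Set ContinuousLinearMap

section ParamIntegral

variable {P : Type} [NormedAddCommGroup P] [NormedSpace ℝ P] [FiniteDimensional ℝ P]

private lemma cont_param_integral {F : Type} [NormedAddCommGroup F] [NormedSpace ℝ F]
    (h : P × ℝ → F) (hh : Continuous h) :
    Continuous fun x : P => ∫ s in (0:ℝ)..1, h (x, s) := by
  rw [continuous_iff_continuousAt]
  intro x₀
  obtain ⟨C, hC⟩ := ((isCompact_closedBall x₀ 1).prod
    (isCompact_Icc (a := (0:ℝ)) (b := 1))).exists_bound_of_continuousOn hh.continuousOn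
  apply intervalIntegral.continuousAt_of_dominated_interval (bound := fun _ => C)
  · exact Filter.Eventually.of_forall fun x =>
      (hh.comp (Continuous.prodMk_right x)).aestronglyMeasurable
  · filter_upwards [Metric.ball_mem_nhds x₀ one_pos] with x hx
    refine Filter.Eventually.of_forall fun t ht => ?_
    have ht' : t ∈ Icc (0:ℝ) 1 := by
      rw [uIoc_of_le (by norm_num : (0:ℝ) ≤ 1)] at ht
      exact ⟨ht.1.le, ht.2⟩
    exact hC (x, t) ⟨ball_subset_closedBall hx, ht'⟩
  · exact intervalIntegrable_const
  · exact Filter.Eventually.of_forall fun t _ =>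
      (hh.comp (continuous_id.prodMk continuous_const)).continuousAt

private lemma hasFDerivAt_param_integral {F : Type} [NormedAddCommGroup F] [NormedSpace ℝ F]
    (h : P × ℝ → F) (hh : ContDiff ℝ 1 h) (x₀ : P) :
    HasFDerivAt (fun x : P => ∫ s in (0:ℝ)..1, h (x, s))
      (∫ s in (0:ℝ)..1, (fderiv ℝ h (x₀, s)).comp (ContinuousLinearMap.inl ℝ P ℝ)) x₀ := by
  have hcont : Continuous fun z : P × ℝ => (fderiv ℝ h z).comp (ContinuousLinearMap.inl ℝ P ℝ) :=
    ((hh.continuous_fderiv one_ne_zero).clm_comp continuous_const)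
  obtain ⟨C, hC⟩ := ((isCompact_closedBall x₀ 1).prod
    (isCompact_Icc (a := (0:ℝ)) (b := 1))).exists_bound_of_continuousOn hcont.continuousOn
  have key := intervalIntegral.hasFDerivAt_integral_of_dominated_of_fderiv_le
    (F := fun (x : P) (t : ℝ) => h (x, t))
    (F' := fun (x : P) (t : ℝ) => (fderiv ℝ h (x, t)).comp (ContinuousLinearMap.inl ℝ P ℝ))
    (bound := fun _ => C) (μ := volume) (a := 0) (b := 1) (x₀ := x₀) (Metric.ball_mem_nhds x₀ one_pos)
    ?_ ?_ ?_ ?_ ?_ ?_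
  · exact key
  · exact Filter.Eventually.of_forall fun x =>
      ((hh.continuous).comp (Continuous.prodMk_right x)).aestronglyMeasurable
  · exact ((hh.continuous).comp (Continuous.prodMk_right x₀)).intervalIntegrable 0 1
  · exact (hcont.comp (Continuous.prodMk_right x₀)).aestronglyMeasurable
  · refine Filter.Eventually.of_forall fun t ht x hx => ?_
    have ht' : t ∈ Icc (0:ℝ) 1 := by
      rw [uIoc_of_le (by norm_num : (0:ℝ) ≤ 1)] at ht
      exact ⟨ht.1.le, ht.2⟩
    exact hC ((x, t)) ⟨ball_subset_closedBall hx, ht'⟩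
  · exact intervalIntegrable_const
  · refine Filter.Eventually.of_forall fun t _ x _ => ?_
    exact ((hh.differentiable one_ne_zero (x, t)).hasFDerivAt).comp x
      (hasFDerivAt_prodMk_left x t)

private lemma contDiff_param_integral_nat : ∀ (k : ℕ) {F : Type} [NormedAddCommGroup F]
    [NormedSpace ℝ F] [CompleteSpace F] (h : P × ℝ → F), ContDiff ℝ k h →
    ContDiff ℝ k fun x : P => ∫ s in (0:ℝ)..1, h (x, s) := by
  intro k
  induction k with
  | zero =>
    intro F _ _ _ h hh
    exact contDiff_zero.2 (cont_param_integral h (contDiff_zero.1 hh))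
  | succ k ih =>
    intro F _ _ _ h hh
    have hh1 : ContDiff ℝ 1 h :=
      hh.of_le (by exact_mod_cast Nat.one_le_iff_ne_zero.2 (Nat.succ_ne_zero k))
    have hcast : ((k + 1 : ℕ) : WithTop ℕ∞) = (k : WithTop ℕ∞) + 1 := by push_cast; ring
    rw [hcast, contDiff_succ_iff_fderiv]
    refine ⟨fun x => (hasFDerivAt_param_integral h hh1 x).differentiableAt, ?_, ?_⟩
    · intro hω; exact absurd hω (by simp)
    · have heq : (fderiv ℝ fun x : P => ∫ s in (0:ℝ)..1, h (x, s)) =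
        fun x : P => ∫ s in (0:ℝ)..1,
          (fderiv ℝ h (x, s)).comp (ContinuousLinearMap.inl ℝ P ℝ) := by
        funext x
        exact (hasFDerivAt_param_integral h hh1 x).fderiv
      rw [heq]
      refine ih (fun z => (fderiv ℝ h z).comp (ContinuousLinearMap.inl ℝ P ℝ)) ?_
      exact (hh.fderiv_right (by exact_mod_cast le_rfl)).clm_comp contDiff_const

private lemma contDiff_param_integral {F : Type} [NormedAddCommGroup F]
    [NormedSpace ℝ F] [CompleteSpace F] (k : ℕ∞) (h : P × ℝ → F) (hh : ContDiff ℝ k h) :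
    ContDiff ℝ k fun x : P => ∫ s in (0:ℝ)..1, h (x, s) := by
  cases k with
  | top =>
    rw [contDiff_infty] at hh ⊢
    exact fun j => contDiff_param_integral_nat j h (hh j)
  | coe k => exact contDiff_param_integral_nat k h hh

end ParamIntegral

/-- Parametrized Hadamard lemma: for a `C^r` map `f : ℝⁿ × ℝᵐ → ℝ^q` vanishing on the zero
section, the map `g̃(τ, x, v) = Σᵢ vᵢ ∫_0^1 ∂f/∂vᵢ(x, sτv) ds` is `C^{r-1}`, satisfies
`f(x, τv) = τ g̃(τ, x, v)`, is linear in `v` at `τ = 0`, and its fiber partial derivatives at the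
zero section coincide with those of `f`. -/
theorem hadamard_lemma_parametrized
    {n m q : ℕ} (hn : 0 < n) (hm : 0 < m) (hq : 0 < q)
    (r : ℕ∞) (hr : 1 ≤ r)
    (f : ((Fin n → ℝ) × (Fin m → ℝ)) → (Fin q → ℝ))
    (hf : ContDiff ℝ r f)
    (hf0 : ∀ x : Fin n → ℝ, f (x, 0) = 0)
    (g : ℝ → (Fin n → ℝ) → (Fin m → ℝ) → (Fin q → ℝ))
    (hg : ∀ (τ : ℝ) (x : Fin n → ℝ) (v : Fin m → ℝ),
      g τ x v = ∑ i : Fin m, v i •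
        ∫ s in (0:ℝ)..1,
          fderiv ℝ (fun w : Fin m → ℝ => f (x, w)) (s • (τ • v)) (Pi.single i 1)) :
    ContDiff ℝ (r - 1) (fun p : ℝ × (Fin n → ℝ) × (Fin m → ℝ) => g p.1 p.2.1 p.2.2)
    ∧ (∀ (τ : ℝ) (x : Fin n → ℝ) (v : Fin m → ℝ), f (x, τ • v) = τ • g τ x v)
    ∧ (∀ (x : Fin n → ℝ) (v : Fin m → ℝ), g 1 x v = f (x, v))
    ∧ (∀ (τ : ℝ) (x : Fin n → ℝ) (v : Fin m → ℝ), τ ≠ 0 → g τ x v = τ⁻¹ • f (x, τ • v))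
    ∧ (∀ (x : Fin n → ℝ) (v : Fin m → ℝ),
        g 0 x v = ∑ i : Fin m, v i •
          fderiv ℝ (fun w : Fin m → ℝ => f (x, w)) 0 (Pi.single i 1))
    ∧ (∀ x : Fin n → ℝ, IsLinearMap ℝ (g 0 x))
    ∧ (∀ (τ : ℝ) (x : Fin n → ℝ) (i : Fin m),
        fderiv ℝ (fun w : Fin m → ℝ => g τ x w) 0 (Pi.single i 1)
          = fderiv ℝ (fun w : Fin m → ℝ => f (x, w)) 0 (Pi.single i 1)) := by
  have hr' : (1 : WithTop ℕ∞) ≤ (r : WithTop ℕ∞) := by exact_mod_cast hr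
  have hf1 : ContDiff ℝ 1 f := hf.of_le hr'
  have hdf : Differentiable ℝ f := hf1.differentiable one_ne_zero
  have cDeriv : Continuous (fderiv ℝ f) := hf.continuous_fderiv (ENat.one_le_iff_ne_zero_withTop.mp hr')
  -- partial derivative in the second factor
  have hpart : ∀ (x : Fin n → ℝ) (y : Fin m → ℝ),
      HasFDerivAt (fun w : Fin m → ℝ => f (x, w))
        ((fderiv ℝ f (x, y)).comp (ContinuousLinearMap.inr ℝ (Fin n → ℝ) (Fin m → ℝ))) y :=
    fun x y => (hdf (x, y)).hasFDerivAt.comp y (hasFDerivAt_prodMk_right x y)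
  have key : ∀ (x : Fin n → ℝ) (y u : Fin m → ℝ),
      fderiv ℝ (fun w : Fin m → ℝ => f (x, w)) y u = fderiv ℝ f (x, y) (0, u) := by
    intro x y u
    rw [(hpart x y).fderiv]
    simp
  -- linearity in the direction
  have sumD : ∀ (y : (Fin n → ℝ) × (Fin m → ℝ)) (v : Fin m → ℝ),
      ∑ i : Fin m, v i • fderiv ℝ f y ((0 : Fin n → ℝ), Pi.single i 1)
        = fderiv ℝ f y ((0 : Fin n → ℝ), v) := by
    intro y v
    have h0 : ((0 : Fin n → ℝ), v) = ∑ i : Fin m,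
        v i • (((0 : Fin n → ℝ), Pi.single i 1) : (Fin n → ℝ) × (Fin m → ℝ)) := by
      ext j
      · simp [Prod.fst_sum]
      · simp [Prod.snd_sum, ← Pi.single_smul, Finset.univ_sum_single]
    rw [h0, map_sum]
    simp only [← _root_.map_smul, Prod.smul_mk, smul_zero]
  -- integrability of the integrands
  have hIcont : ∀ (τ : ℝ) (x : Fin n → ℝ) (v u : Fin m → ℝ),
      Continuous fun s : ℝ => fderiv ℝ f (x, s • τ • v) ((0 : Fin n → ℝ), u) := by
    intro τ x v u
    have : Continuous fun s : ℝ => fderiv ℝ f (x, s • τ • v) :=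
      cDeriv.comp (continuous_const.prodMk ((continuous_id.smul continuous_const)))
    exact this.clm_apply continuous_const
  -- the integral formula for g
  have gInt : ∀ (τ : ℝ) (x : Fin n → ℝ) (v : Fin m → ℝ),
      g τ x v = ∫ s in (0:ℝ)..1, fderiv ℝ f (x, s • τ • v) ((0 : Fin n → ℝ), v) := by
    intro τ x v
    rw [hg]
    have e1 : ∀ i : Fin m,
        (∫ s in (0:ℝ)..1, fderiv ℝ (fun w : Fin m → ℝ => f (x, w)) (s • (τ • v)) (Pi.single i 1))
        = ∫ s in (0:ℝ)..1, fderiv ℝ f (x, s • τ • v) ((0 : Fin n → ℝ), Pi.single i 1) := by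
      intro i
      refine intervalIntegral.integral_congr fun s _ => ?_
      exact key x (s • τ • v) (Pi.single i 1)
    simp only [e1, ← intervalIntegral.integral_smul]
    refine (intervalIntegral.integral_finset_sum (μ := volume) (a := (0:ℝ)) (b := 1)
      (s := Finset.univ)
      (f := fun (i : Fin m) (s : ℝ) =>
        v i • fderiv ℝ f (x, s • τ • v) ((0 : Fin n → ℝ), Pi.single i 1))
      (fun i _ =>
        ((hIcont τ x v (Pi.single i 1)).intervalIntegrable 0 1).smul (v i))).symm.trans ?_
    exact intervalIntegral.integral_congr fun s _ => sumD (x, s • τ • v) v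
  -- part (b): fundamental theorem of calculus
  have bpart : ∀ (τ : ℝ) (x : Fin n → ℝ) (v : Fin m → ℝ), f (x, τ • v) = τ • g τ x v := by
    intro τ x v
    have hderiv : ∀ s : ℝ, HasDerivAt (fun s : ℝ => f (x, s • τ • v))
        (fderiv ℝ f (x, s • τ • v) ((0 : Fin n → ℝ), τ • v)) s := by
      intro s
      have h2 : HasDerivAt (fun s : ℝ => ((x, s • τ • v) : (Fin n → ℝ) × (Fin m → ℝ)))
          (((0 : Fin n → ℝ), τ • v)) s := by
        have := (hasDerivAt_const s x).prodMk ((hasDerivAt_id s).smul_const (τ • v))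
        simpa using this
      exact (hdf (x, s • τ • v)).hasFDerivAt.comp_hasDerivAt s h2
    have hftc := intervalIntegral.integral_eq_sub_of_hasDerivAt
      (f := fun s : ℝ => f (x, s • τ • v)) (fun s _ => hderiv s)
      ((hIcont τ x v (τ • v)).intervalIntegrable 0 1)
    rw [gInt, ← intervalIntegral.integral_smul]
    have e2 : ∀ s : ℝ, τ • fderiv ℝ f (x, s • τ • v) ((0 : Fin n → ℝ), v)
        = fderiv ℝ f (x, s • τ • v) ((0 : Fin n → ℝ), τ • v) := by
      intro s
      rw [← _root_.map_smul]
      congr 1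
      ext j <;> simp
    rw [intervalIntegral.integral_congr (fun s _ => e2 s), hftc]
    simp [hf0 x]
  have onepart : ∀ (x : Fin n → ℝ) (v : Fin m → ℝ), g 1 x v = f (x, v) := by
    intro x v
    have := bpart 1 x v
    simpa using this.symm
  have invpart : ∀ (τ : ℝ) (x : Fin n → ℝ) (v : Fin m → ℝ), τ ≠ 0 →
      g τ x v = τ⁻¹ • f (x, τ • v) := by
    intro τ x v hτ
    rw [bpart τ x v, smul_smul, inv_mul_cancel₀ hτ, one_smul]
  have cpart : ∀ (x : Fin n → ℝ) (v : Fin m → ℝ),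
      g 0 x v = ∑ i : Fin m, v i •
        fderiv ℝ (fun w : Fin m → ℝ => f (x, w)) 0 (Pi.single i 1) := by
    intro x v
    rw [hg]
    simp only [zero_smul, smul_zero, intervalIntegral.integral_const, sub_zero, one_smul]
  have gzero : ∀ (x : Fin n → ℝ) (v : Fin m → ℝ),
      g 0 x v = fderiv ℝ f (x, 0) ((0 : Fin n → ℝ), v) := by
    intro x v
    rw [cpart x v]
    simp only [key]
    exact sumD (x, 0) v
  have linpart : ∀ x : Fin n → ℝ, IsLinearMap ℝ (g 0 x) := by
    intro x
    refine ⟨fun a b => ?_, fun c a => ?_⟩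
    · rw [gzero, gzero, gzero, ← map_add]
      congr 1
      ext j <;> simp
    · rw [gzero, gzero, ← _root_.map_smul]
      congr 1
      ext j <;> simp
  have dpart : ∀ (τ : ℝ) (x : Fin n → ℝ) (i : Fin m),
      fderiv ℝ (fun w : Fin m → ℝ => g τ x w) 0 (Pi.single i 1)
        = fderiv ℝ (fun w : Fin m → ℝ => f (x, w)) 0 (Pi.single i 1) := by
    intro τ x i
    rcases eq_or_ne τ 0 with h0 | hτ
    · subst h0
      have heq : (fun w : Fin m → ℝ => g 0 x w) = fun w : Fin m → ℝ =>
          ((fderiv ℝ f (x, 0)).comp (ContinuousLinearMap.inr ℝ (Fin n → ℝ) (Fin m → ℝ))) w := by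
        funext w
        rw [gzero x w]
        simp
      rw [heq, ContinuousLinearMap.fderiv, key]
      simp
    · have heq : (fun w : Fin m → ℝ => g τ x w) = fun w => τ⁻¹ • f (x, τ • w) := by
        funext w
        exact invpart τ x w hτ
      rw [heq]
      have h2 : HasFDerivAt (fun w : Fin m → ℝ => τ • w)
          (τ • ContinuousLinearMap.id ℝ (Fin m → ℝ)) 0 := (hasFDerivAt_id 0).const_smul τ
      have h3 : HasFDerivAt (fun w : Fin m → ℝ => f (x, τ • w))
          (((fderiv ℝ f (x, τ • (0 : Fin m → ℝ))).comp
              (ContinuousLinearMap.inr ℝ (Fin n → ℝ) (Fin m → ℝ))).comp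
            (τ • ContinuousLinearMap.id ℝ (Fin m → ℝ))) 0 :=
        (hpart x (τ • (0 : Fin m → ℝ))).comp 0 h2
      have h4 : HasFDerivAt (fun w : Fin m → ℝ => τ⁻¹ • f (x, τ • w)) _ 0 := h3.const_smul τ⁻¹
      rw [h4.fderiv, key]
      have hv : (((0 : Fin n → ℝ), τ • (Pi.single i 1 : Fin m → ℝ)) : (Fin n → ℝ) × (Fin m → ℝ))
          = τ • (((0 : Fin n → ℝ), Pi.single i 1) : (Fin n → ℝ) × (Fin m → ℝ)) := by
        ext j <;> simp
      simp only [ContinuousLinearMap.coe_smul', Pi.smul_apply, ContinuousLinearMap.coe_comp',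
        Function.comp_apply, ContinuousLinearMap.coe_id', id_eq,
        ContinuousLinearMap.inr_apply, smul_zero, hv, _root_.map_smul, smul_smul,
        inv_mul_cancel₀ hτ, one_smul]
  -- part (a): smoothness
  have smooth : ContDiff ℝ ((r - 1 : ℕ∞))
      (fun p : ℝ × (Fin n → ℝ) × (Fin m → ℝ) => g p.1 p.2.1 p.2.2) := by
    have hfun : (fun p : ℝ × (Fin n → ℝ) × (Fin m → ℝ) => g p.1 p.2.1 p.2.2)
        = fun p : ℝ × (Fin n → ℝ) × (Fin m → ℝ) => ∫ s in (0:ℝ)..1,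
            (fun z : (ℝ × (Fin n → ℝ) × (Fin m → ℝ)) × ℝ =>
              fderiv ℝ f (z.1.2.1, z.2 • z.1.1 • z.1.2.2) ((0 : Fin n → ℝ), z.1.2.2)) (p, s) := by
      funext p
      exact gInt p.1 p.2.1 p.2.2
    rw [hfun]
    refine contDiff_param_integral (P := ℝ × (Fin n → ℝ) × (Fin m → ℝ)) (r - 1)
      (fun z : (ℝ × (Fin n → ℝ) × (Fin m → ℝ)) × ℝ =>
        fderiv ℝ f (z.1.2.1, z.2 • z.1.1 • z.1.2.2) ((0 : Fin n → ℝ), z.1.2.2)) ?_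
    have hsub : ((r - 1 : ℕ∞) : WithTop ℕ∞) + 1 ≤ (r : WithTop ℕ∞) := by
      exact_mod_cast le_of_eq (tsub_add_cancel_of_le hr)
    have hφ : ContDiff ℝ ((r - 1 : ℕ∞)) (fun z : (ℝ × (Fin n → ℝ) × (Fin m → ℝ)) × ℝ =>
        ((z.1.2.1, z.2 • z.1.1 • z.1.2.2) : (Fin n → ℝ) × (Fin m → ℝ))) := by
      fun_prop
    have hu : ContDiff ℝ ((r - 1 : ℕ∞)) (fun z : (ℝ × (Fin n → ℝ) × (Fin m → ℝ)) × ℝ =>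
        (((0 : Fin n → ℝ), z.1.2.2) : (Fin n → ℝ) × (Fin m → ℝ))) := by
      fun_prop
    exact ((hf.fderiv_right hsub).comp hφ).clm_apply hu
  exact ⟨smooth, bpart, onepart, invpart, cpart, linpart, dpart⟩
end

section
/- Let h = (a, b) : ℝⁿ × ℝᵐ → ℝ^p × ℝ^q be a C^∞ map with b(x, 0) = 0 for all x ∈ ℝⁿ. Then there exists a unique continuous map α : ℝ × ℝⁿ × ℝᵐ → ℝ^p × ℝ^q such that α(τ, x, v) = ( a(x, τ·v), b(x, τ·v)/τ ) for all τ ≠ 0. Moreover this α is C^∞ and satisfies: (a) α(1, x, v) = h(x, v); (b) α(τ, x, 0) = (a(x, 0), 0) = h(x, 0) for all τ ∈ ℝ; (c) α(0, x, v) = ( a(x, 0), S_x(v) ), where S_x : ℝᵐ → ℝ^q is the Fréchet derivative at 0 of the map v ↦ b(x, v); in particular v ↦ α(0, x, v) is the fiberwise-linear map determined by the derivative of b along the fibers at the zero section. -/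
open intervalIntegral MeasureTheory Set Metric
open scoped ContDiff
set_option maxHeartbeats 1000000

lemma contDiff_parametric_integral_aux
    {E : Type} [NormedAddCommGroup E] [NormedSpace ℝ E] [FiniteDimensional ℝ E] :
    ∀ (N : ℕ) {F : Type} [NormedAddCommGroup F] [NormedSpace ℝ F] [CompleteSpace F]
      (f : E × ℝ → F), ContDiff ℝ (⊤ : ℕ∞) f →
      ContDiff ℝ (N : ℕ∞) (fun x : E => ∫ s in (0:ℝ)..1, f (x, s)) := by
  intro N
  induction N with
  | zero =>
    intro F _ _ _ f hf
    refine contDiff_zero.2 ?_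
    exact intervalIntegral.continuous_parametric_intervalIntegral_of_continuous'
      (f := fun x s => f (x, s)) hf.continuous 0 1
  | succ N IH =>
    intro F _ _ _ f hf
    set D : E × ℝ → (E →L[ℝ] F) :=
      fun z => (fderiv ℝ f z).comp ((ContinuousLinearMap.id ℝ E).prod 0) with hDdef
    have hD : ContDiff ℝ (⊤ : ℕ∞) D :=
      (hf.fderiv_right (by norm_cast)).clm_comp contDiff_const
    have hderiv : ∀ x₀ : E,
        HasFDerivAt (fun x : E => ∫ s in (0:ℝ)..1, f (x, s))
          (∫ s in (0:ℝ)..1, D (x₀, s)) x₀ := by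
      intro x₀
      haveI : SecondCountableTopologyEither ℝ (E →L[ℝ] F) := ⟨Or.inl inferInstance⟩
      have hK : IsCompact ((closedBall x₀ 1) ×ˢ (uIcc (0:ℝ) 1)) :=
        (isCompact_closedBall _ _).prod isCompact_uIcc
      obtain ⟨C, hC⟩ := hK.exists_bound_of_continuousOn hD.continuous.continuousOn
      apply intervalIntegral.hasFDerivAt_integral_of_dominated_of_fderiv_le
        (F := fun x s => f (x, s)) (F' := fun x s => D (x, s))
        (bound := fun _ => C) (s := ball x₀ 1) (ball_mem_nhds x₀ one_pos)
      · exact Filter.Eventually.of_forall fun x =>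
          (hf.continuous.comp (continuous_const.prodMk continuous_id)).aestronglyMeasurable
      · exact (hf.continuous.comp (continuous_const.prodMk continuous_id)).intervalIntegrable _ _
      · exact (hD.continuous.comp (continuous_const.prodMk continuous_id)).aestronglyMeasurable
      · refine Filter.Eventually.of_forall fun t ht x hx => hC (x, t) ⟨ball_subset_closedBall hx, ?_⟩
        exact uIoc_subset_uIcc ht
      · exact intervalIntegrable_const
      · refine Filter.Eventually.of_forall fun t ht x hx => ?_
        have h1 : HasFDerivAt (fun x : E => (x, t))
            ((ContinuousLinearMap.id ℝ E).prod 0) x :=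
          (hasFDerivAt_id x).prodMk (hasFDerivAt_const t x)
        exact ((hf.differentiable (by simp) (x, t)).hasFDerivAt).comp x h1
    have hdiff : Differentiable ℝ (fun x : E => ∫ s in (0:ℝ)..1, f (x, s)) :=
      fun x => (hderiv x).differentiableAt
    have hfd : (fderiv ℝ (fun x : E => ∫ s in (0:ℝ)..1, f (x, s)))
        = fun x₀ => ∫ s in (0:ℝ)..1, D (x₀, s) := funext fun x₀ => (hderiv x₀).fderiv
    have hcast : (((N + 1 : ℕ) : ℕ∞) : WithTop ℕ∞) = ((N : ℕ∞) : WithTop ℕ∞) + 1 := by norm_cast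
    rw [hcast, contDiff_succ_iff_fderiv]
    exact ⟨hdiff, by simp, hfd ▸ IH D hD⟩



/-- Hadamard lemma for (trivialized) vector bundles: given a smooth map
`h = (a, b) : ℝⁿ × ℝᵐ → ℝ^p × ℝ^q` sending the zero section to the zero section, there is a
unique continuous map `α(τ, x, v)` equal to `(a(x, τv), b(x, τv)/τ)` for `τ ≠ 0`; moreover `α`
is smooth, `α(1, x, v) = h(x, v)`, `α(τ, x, 0) = h(x, 0)`, and `α(0, x, v)` is the fiberwise
derivative of `b` at the zero section. -/
theorem hadamard_lemma_vector_bundles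
    {n m p q : ℕ} (hn : 0 < n) (hm : 0 < m) (hp : 0 < p) (hq : 0 < q)
    (a : ((Fin n → ℝ) × (Fin m → ℝ)) → (Fin p → ℝ))
    (b : ((Fin n → ℝ) × (Fin m → ℝ)) → (Fin q → ℝ))
    (hab : ContDiff ℝ (⊤ : ℕ∞) (fun z => (a z, b z)))
    (hb0 : ∀ x : Fin n → ℝ, b (x, 0) = 0) :
    (∃! α : ℝ × (Fin n → ℝ) × (Fin m → ℝ) → (Fin p → ℝ) × (Fin q → ℝ),
        Continuous α ∧
        ∀ (τ : ℝ), τ ≠ 0 → ∀ (x : Fin n → ℝ) (v : Fin m → ℝ),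
          α (τ, x, v) = (a (x, τ • v), τ⁻¹ • b (x, τ • v)))
    ∧ ∀ α : ℝ × (Fin n → ℝ) × (Fin m → ℝ) → (Fin p → ℝ) × (Fin q → ℝ),
        Continuous α →
        (∀ (τ : ℝ), τ ≠ 0 → ∀ (x : Fin n → ℝ) (v : Fin m → ℝ),
          α (τ, x, v) = (a (x, τ • v), τ⁻¹ • b (x, τ • v))) →
        ContDiff ℝ (⊤ : ℕ∞) α
        ∧ (∀ (x : Fin n → ℝ) (v : Fin m → ℝ), α (1, x, v) = (a (x, v), b (x, v)))
        ∧ (∀ (τ : ℝ) (x : Fin n → ℝ), α (τ, x, 0) = (a (x, 0), 0))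
        ∧ (∀ (x : Fin n → ℝ) (v : Fin m → ℝ),
            α (0, x, v) = (a (x, 0), fderiv ℝ (fun w : Fin m → ℝ => b (x, w)) 0 v)) := by
  have ha : ContDiff ℝ (⊤ : ℕ∞) a := (contDiff_fst.comp hab : _)
  have hb : ContDiff ℝ (⊤ : ℕ∞) b := (contDiff_snd.comp hab : _)
  set E := ℝ × (Fin n → ℝ) × (Fin m → ℝ) with hE
  -- the integrand
  set f : E × ℝ → (Fin q → ℝ) :=
    fun zs => (fderiv ℝ b (zs.1.2.1, (zs.2 * zs.1.1) • zs.1.2.2)) ((0 : Fin n → ℝ), zs.1.2.2)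
    with hfdef
  have hf : ContDiff ℝ (⊤ : ℕ∞) f := by
    have hDb : ContDiff ℝ (⊤ : ℕ∞) (fderiv ℝ b) := hb.fderiv_right (by norm_cast)
    have hin : ContDiff ℝ (⊤ : ℕ∞)
        (fun zs : E × ℝ => ((zs.1.2.1 : Fin n → ℝ), (zs.2 * zs.1.1) • zs.1.2.2)) := by
      exact contDiff_fst.snd.fst.prodMk ((contDiff_snd.mul contDiff_fst.fst).smul contDiff_fst.snd.snd)
    have hout : ContDiff ℝ (⊤ : ℕ∞)
        (fun zs : E × ℝ => (((0 : Fin n → ℝ), zs.1.2.2) : (Fin n → ℝ) × (Fin m → ℝ))) := by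
      exact contDiff_const.prodMk contDiff_fst.snd.snd
    exact (hDb.comp hin).clm_apply hout
  -- the candidate map
  set c : E → Fin q → ℝ := fun z => ∫ s in (0:ℝ)..1, f (z, s) with hcdef
  have hc : ContDiff ℝ (⊤ : ℕ∞) c := by
    rw [show (((⊤ : ℕ∞)) : WithTop ℕ∞) = ∞ from rfl, contDiff_infty]
    intro N
    exact contDiff_parametric_integral_aux N f hf
  -- the key Hadamard identity
  have hkey : ∀ (τ : ℝ) (x : Fin n → ℝ) (v : Fin m → ℝ), b (x, τ • v) = τ • c (τ, x, v) := by
    intro τ x v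
    have hu : ∀ s ∈ uIcc (0:ℝ) 1,
        HasDerivAt (fun s : ℝ => b (x, (s * τ) • v)) (τ • f ((τ, x, v), s)) s := by
      intro s _
      have hγ : HasDerivAt (fun s : ℝ => ((x, (s * τ) • v) : (Fin n → ℝ) × (Fin m → ℝ)))
          ((0 : Fin n → ℝ), τ • v) s := by
        simpa using
          (hasDerivAt_const s x).prodMk (((hasDerivAt_id s).mul_const τ).smul_const v)
      have hbd := ((hb.differentiable (by simp)
          (x, (s * τ) • v)).hasFDerivAt).comp_hasDerivAt s hγ
      have heq : (fderiv ℝ b (x, (s * τ) • v)) ((0 : Fin n → ℝ), τ • v)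
          = τ • f ((τ, x, v), s) := by
        have h0 : (((0 : Fin n → ℝ), τ • v) : (Fin n → ℝ) × (Fin m → ℝ))
            = τ • (((0 : Fin n → ℝ), v) : (Fin n → ℝ) × (Fin m → ℝ)) := by
          simp [Prod.smul_mk]
        rw [h0, ContinuousLinearMap.map_smul]
      exact heq ▸ hbd
    have hint : IntervalIntegrable (fun s : ℝ => τ • f ((τ, x, v), s)) volume 0 1 :=
      ((hf.continuous.comp (continuous_const.prodMk continuous_id)).const_smul τ
        ).intervalIntegrable _ _
    have := intervalIntegral.integral_eq_sub_of_hasDerivAt hu hint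
    rw [intervalIntegral.integral_smul] at this
    simpa [hb0 x, hcdef] using this.symm
  set α₀ : E → (Fin p → ℝ) × (Fin q → ℝ) :=
    fun z => (a (z.2.1, z.1 • z.2.2), c z) with hα₀def
  have hα₀smooth : ContDiff ℝ (⊤ : ℕ∞) α₀ := by
    refine ContDiff.prodMk ?_ hc
    have : ContDiff ℝ (⊤ : ℕ∞) (fun z : E => ((z.2.1, z.1 • z.2.2) :
        (Fin n → ℝ) × (Fin m → ℝ))) := by
        exact contDiff_snd.fst.prodMk (contDiff_fst.smul contDiff_snd.snd)
    exact ha.comp this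
  have hα₀cont : Continuous α₀ := hα₀smooth.continuous
  have hα₀form : ∀ (τ : ℝ), τ ≠ 0 → ∀ (x : Fin n → ℝ) (v : Fin m → ℝ),
      α₀ (τ, x, v) = (a (x, τ • v), τ⁻¹ • b (x, τ • v)) := by
    intro τ hτ x v
    have : τ⁻¹ • b (x, τ • v) = c (τ, x, v) := by
      rw [hkey τ x v, smul_smul, inv_mul_cancel₀ hτ, one_smul]
    simp [hα₀def, this]
  -- density of τ ≠ 0
  have hdense : Dense {z : E | z.1 ≠ 0} := by
    have : Dense (({0}ᶜ : Set ℝ) ×ˢ (univ : Set ((Fin n → ℝ) × (Fin m → ℝ)))) :=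
      (dense_compl_singleton 0).prod dense_univ
    convert this using 1
    ext z
    exact ⟨fun h => ⟨h, Set.mem_univ _⟩, fun h => h.1⟩
  have huniq : ∀ β : E → (Fin p → ℝ) × (Fin q → ℝ), Continuous β →
      (∀ (τ : ℝ), τ ≠ 0 → ∀ (x : Fin n → ℝ) (v : Fin m → ℝ),
        β (τ, x, v) = (a (x, τ • v), τ⁻¹ • b (x, τ • v))) → β = α₀ := by
    intro β hβc hβf
    refine Continuous.ext_on hdense hβc hα₀cont ?_
    rintro ⟨τ, x, v⟩ hτ
    rw [hβf τ hτ x v, hα₀form τ hτ x v]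
  constructor
  · exact ⟨α₀, ⟨hα₀cont, hα₀form⟩, fun β hβ => huniq β hβ.1 hβ.2⟩
  · intro α hαc hαf
    have hEq : α = α₀ := huniq α hαc hαf
    have hc00 : ∀ (x : Fin n → ℝ) (v : Fin m → ℝ),
        c (0, x, v) = fderiv ℝ b (x, 0) ((0 : Fin n → ℝ), v) := by
      intro x v
      have : (fun s : ℝ => f ((0, x, v), s))
          = fun _ : ℝ => fderiv ℝ b (x, 0) ((0 : Fin n → ℝ), v) := by
        funext s
        simp [hfdef]
      rw [hcdef]
      simp only [this, intervalIntegral.integral_const, sub_zero, one_smul]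
    refine ⟨hEq ▸ hα₀smooth, ?_, ?_, ?_⟩
    · intro x v
      rw [hαf 1 one_ne_zero x v]
      simp
    · intro τ x
      rcases eq_or_ne τ 0 with rfl | hτ
      · rw [hEq]
        simp only [hα₀def, smul_zero]
        rw [show ((0 : Fin m → ℝ)) = (0:ℝ) • (0 : Fin m → ℝ) by simp] at hc00 ⊢
        simp [hc00 x 0, hb0 x, Prod.mk_zero_zero]
      · rw [hαf τ hτ x 0]
        simp [hb0 x]
    · intro x v
      rw [hEq]
      have hpart : fderiv ℝ (fun w : Fin m → ℝ => b (x, w)) 0 v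
          = fderiv ℝ b (x, 0) ((0 : Fin n → ℝ), v) := by
        have hin : HasFDerivAt (fun w : Fin m → ℝ => ((x, w) : (Fin n → ℝ) × (Fin m → ℝ)))
            ((0 : (Fin m → ℝ) →L[ℝ] (Fin n → ℝ)).prod (ContinuousLinearMap.id ℝ _)) 0 :=
          (hasFDerivAt_const x 0).prodMk (hasFDerivAt_id 0)
        have hcomp := ((hb.differentiable (by simp)
            (x, 0)).hasFDerivAt).comp 0 hin
        have hfd : fderiv ℝ (fun w : Fin m → ℝ => b (x, w)) 0
            = (fderiv ℝ b (x, 0)).comp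
              ((0 : (Fin m → ℝ) →L[ℝ] (Fin n → ℝ)).prod (ContinuousLinearMap.id ℝ _)) :=
          hcomp.fderiv
        rw [hfd]
        simp
      rw [hpart]
      simp [hα₀def, hc00 x v]
end

section
/- Let h = (a, b) : ℝⁿ × ℝᵐ → ℝ^p × ℝ^q be a C^∞ map with b(x, 0) = 0 for all x ∈ ℝⁿ, and define α : ℝ × ℝⁿ × ℝᵐ → ℝ^p × ℝ^q by α(τ, x, v) = ( a(x, τ·v), Σ_{i=1}^{m} vᵢ · ∫_0^1 (∂b/∂vᵢ)(x, s·τ·v) ds ). Then for every τ ∈ ℝ and every x ∈ ℝⁿ, the total (Fréchet) derivative of the map (x', v') ↦ α(τ, x', v') at the point (x, 0) sends (u, w) ∈ ℝⁿ × ℝᵐ to ( P(u) + τ·Q(w), S(w) ), where P is the derivative at x of x' ↦ a(x', 0), Q is the derivative at 0 of v' ↦ a(x, v'), and S is the derivative at 0 of v' ↦ b(x, v'). In particular the 'R-block' (derivative of the second component in the x-directions at the zero section) vanishes, and the 'Q-block' gets multiplied by τ. -/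
open Asymptotics

lemma hasFDerivAt_smul_of_continuousAt {E F : Type*} [NormedAddCommGroup E] [NormedSpace ℝ E]
    [NormedAddCommGroup F] [NormedSpace ℝ F]
    {f : E → ℝ} {g : E → F} {z₀ : E} {Lf : E →L[ℝ] ℝ}
    (hf : HasFDerivAt f Lf z₀) (hf0 : f z₀ = 0) (hg : ContinuousAt g z₀) :
    HasFDerivAt (fun z => f z • g z) (Lf.smulRight (g z₀)) z₀ := by
  rw [hasFDerivAt_iff_isLittleO]
  have heps : (fun z => f z - f z₀ - Lf (z - z₀)) =o[nhds z₀] fun z => z - z₀ :=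
    hasFDerivAt_iff_isLittleO.mp hf
  have h1 : (fun z => (f z - f z₀ - Lf (z - z₀)) • g z₀) =o[nhds z₀] fun z => z - z₀ := by
    refine IsBigO.trans_isLittleO ?_ heps
    refine IsBigO.of_bound ‖g z₀‖ (Filter.Eventually.of_forall fun z => ?_)
    rw [norm_smul, mul_comm]
  have h2 : (fun z => (f z - f z₀) • (g z - g z₀)) =o[nhds z₀] fun z => z - z₀ := by
    have hO : (fun z => f z - f z₀) =O[nhds z₀] fun z => ‖z - z₀‖ := hf.isBigO_sub.norm_right
    have ho : (fun z => g z - g z₀) =o[nhds z₀] (fun _ => (1:ℝ)) := by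
      rw [isLittleO_one_iff]
      simpa using hg.tendsto.sub_const (g z₀)
    have := hO.smul_isLittleO ho
    simp only [smul_eq_mul, mul_one] at this
    exact this.of_norm_right
  have := h1.add h2
  refine this.congr (fun z => ?_) (fun z => rfl)
  simp only [hf0, sub_zero, zero_smul, ContinuousLinearMap.smulRight_apply, smul_sub, sub_smul]
  abel

/-- Block structure of the Jacobi matrix of the linearizing homotopy at the zero section:
for `α(τ, x, v) = (a(x, τv), Σᵢ vᵢ ∫_0^1 ∂b/∂vᵢ(x, sτv) ds)`, the total derivative of
`(x', v') ↦ α(τ, x', v')` at `(x, 0)` sends `(u, w)` to `(P u + τ Q w, S w)`, where `P`, `Q`,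
`S` are the corresponding blocks of the Jacobi matrix of `(a, b)` at `(x, 0)`. -/
theorem jacobi_blocks_of_linearizing_homotopy
    {n m p q : ℕ} (hn : 0 < n) (hm : 0 < m) (hp : 0 < p) (hq : 0 < q)
    (a : ((Fin n → ℝ) × (Fin m → ℝ)) → (Fin p → ℝ))
    (b : ((Fin n → ℝ) × (Fin m → ℝ)) → (Fin q → ℝ))
    (hab : ContDiff ℝ (⊤ : ℕ∞) (fun z => (a z, b z)))
    (hb0 : ∀ x : Fin n → ℝ, b (x, 0) = 0) :
    ∀ (τ : ℝ) (x : Fin n → ℝ) (u : Fin n → ℝ) (w : Fin m → ℝ),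
      fderiv ℝ
        (fun z : (Fin n → ℝ) × (Fin m → ℝ) =>
          ((a (z.1, τ • z.2),
            ∑ i : Fin m, z.2 i •
              ∫ s in (0:ℝ)..1,
                fderiv ℝ (fun w' : Fin m → ℝ => b (z.1, w')) (s • (τ • z.2)) (Pi.single i 1)) :
            (Fin p → ℝ) × (Fin q → ℝ)))
        (x, 0) (u, w)
      = (fderiv ℝ (fun x' : Fin n → ℝ => a (x', 0)) x u
            + τ • fderiv ℝ (fun v' : Fin m → ℝ => a (x, v')) 0 w,
         fderiv ℝ (fun v' : Fin m → ℝ => b (x, v')) 0 w) := by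
  intro τ x u w
  have ha : ContDiff ℝ (⊤ : ℕ∞) a := (contDiff_fst).comp hab
  have hb : ContDiff ℝ (⊤ : ℕ∞) b := (contDiff_snd).comp hab
  have had : Differentiable ℝ a := ha.differentiable (by simp)
  have hbd : Differentiable ℝ b := hb.differentiable (by simp)
  set A := fderiv ℝ a (x, 0) with hA
  set B := fderiv ℝ b (x, 0) with hB
  -- partial derivative in the second variable, as a function of both variables
  have hpart : ∀ (y : Fin n → ℝ) (v : Fin m → ℝ),
      HasFDerivAt (fun w' : Fin m → ℝ => b (y, w'))
        ((fderiv ℝ b (y, v)).comp (ContinuousLinearMap.inr ℝ (Fin n → ℝ) (Fin m → ℝ))) v :=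
    fun y v => ((hbd (y, v)).hasFDerivAt).comp v (hasFDerivAt_prodMk_right y v)
  have hpart' : ∀ (y : Fin n → ℝ) (v : Fin m → ℝ),
      fderiv ℝ (fun w' : Fin m → ℝ => b (y, w')) v
        = (fderiv ℝ b (y, v)).comp (ContinuousLinearMap.inr ℝ (Fin n → ℝ) (Fin m → ℝ)) :=
    fun y v => (hpart y v).fderiv
  -- the partial maps a(·, 0), a(x, ·)
  have hP : HasFDerivAt (fun x' : Fin n → ℝ => a (x', 0))
      (A.comp (ContinuousLinearMap.inl ℝ (Fin n → ℝ) (Fin m → ℝ))) x :=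
    ((had (x, 0)).hasFDerivAt).comp x (hasFDerivAt_prodMk_left x 0)
  have hQ : HasFDerivAt (fun v' : Fin m → ℝ => a (x, v'))
      (A.comp (ContinuousLinearMap.inr ℝ (Fin n → ℝ) (Fin m → ℝ))) 0 :=
    ((had (x, 0)).hasFDerivAt).comp 0 (hasFDerivAt_prodMk_right x 0)
  -- first component
  have hinner : HasFDerivAt (fun z : (Fin n → ℝ) × (Fin m → ℝ) => (z.1, τ • z.2))
      ((ContinuousLinearMap.fst ℝ (Fin n → ℝ) (Fin m → ℝ)).prod
        (τ • ContinuousLinearMap.snd ℝ (Fin n → ℝ) (Fin m → ℝ))) (x, 0) :=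
    (hasFDerivAt_fst).prodMk (hasFDerivAt_snd.const_smul τ)
  have hF1 : HasFDerivAt (fun z : (Fin n → ℝ) × (Fin m → ℝ) => a (z.1, τ • z.2))
      (A.comp ((ContinuousLinearMap.fst ℝ (Fin n → ℝ) (Fin m → ℝ)).prod
        (τ • ContinuousLinearMap.snd ℝ (Fin n → ℝ) (Fin m → ℝ)))) (x, 0) := by
    have hAat : HasFDerivAt a A ((fun z : (Fin n → ℝ) × (Fin m → ℝ) => (z.1, τ • z.2)) (x, 0)) := by
      simp only [smul_zero]
      exact (had (x, 0)).hasFDerivAt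
    exact hAat.comp (x, 0) hinner
  -- second component: define the integrals
  set g : Fin m → ((Fin n → ℝ) × (Fin m → ℝ)) → (Fin q → ℝ) :=
    fun i z => ∫ s in (0:ℝ)..1, (fderiv ℝ b (z.1, s • (τ • z.2))) (0, Pi.single i 1) with hg
  have hfderiv_cont : Continuous (fderiv ℝ b) := hb.continuous_fderiv (by simp)
  have hgc : ∀ i, Continuous (g i) := by
    intro i
    apply intervalIntegral.continuous_parametric_intervalIntegral_of_continuous'
    exact Continuous.clm_apply
      (hfderiv_cont.comp (by fun_prop)) continuous_const
  have hg0 : ∀ i, g i (x, 0) = B (0, Pi.single i 1) := by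
    intro i
    simp [hg, smul_zero, intervalIntegral.integral_const, hB]
  -- second component derivative
  have hF2 : HasFDerivAt (fun z : (Fin n → ℝ) × (Fin m → ℝ) => ∑ i : Fin m, z.2 i • g i z)
      (∑ i : Fin m, (((ContinuousLinearMap.proj i).comp
          (ContinuousLinearMap.snd ℝ (Fin n → ℝ) (Fin m → ℝ))).smulRight (g i (x, 0)))) (x, 0) := by
    apply HasFDerivAt.fun_sum
    intro i _
    exact hasFDerivAt_smul_of_continuousAt
      (((ContinuousLinearMap.proj i : ((Fin m → ℝ)) →L[ℝ] ℝ).comp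
        (ContinuousLinearMap.snd ℝ (Fin n → ℝ) (Fin m → ℝ))).hasFDerivAt) rfl
      ((hgc i).continuousAt)
  -- combine
  have hF := hF1.prodMk hF2
  have key : fderiv ℝ
      (fun z : (Fin n → ℝ) × (Fin m → ℝ) =>
        ((a (z.1, τ • z.2), ∑ i : Fin m, z.2 i • g i z) : (Fin p → ℝ) × (Fin q → ℝ)))
      (x, 0) = _ := hF.fderiv
  have hgoal_fun : (fun z : (Fin n → ℝ) × (Fin m → ℝ) =>
        ((a (z.1, τ • z.2),
          ∑ i : Fin m, z.2 i •
            ∫ s in (0:ℝ)..1,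
              fderiv ℝ (fun w' : Fin m → ℝ => b (z.1, w')) (s • (τ • z.2)) (Pi.single i 1)) :
          (Fin p → ℝ) × (Fin q → ℝ)))
      = (fun z : (Fin n → ℝ) × (Fin m → ℝ) =>
        ((a (z.1, τ • z.2), ∑ i : Fin m, z.2 i • g i z) : (Fin p → ℝ) × (Fin q → ℝ))) := by
    funext z
    simp only [hpart', ContinuousLinearMap.comp_apply, ContinuousLinearMap.inr_apply, hg]
  rw [hgoal_fun, key]
  rw [hP.fderiv, hQ.fderiv, hpart' x 0]
  -- now pure linear algebra
  have hsmul : ∀ (c : ℝ) (v : Fin m → ℝ), ((0 : Fin n → ℝ), c • v) = c • ((0 : Fin n → ℝ), v) := by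
    intro c v
    simp [Prod.smul_mk]
  simp only [ContinuousLinearMap.prod_apply, ContinuousLinearMap.comp_apply,
    ContinuousLinearMap.sum_apply, ContinuousLinearMap.smulRight_apply,
    ContinuousLinearMap.coe_fst', ContinuousLinearMap.coe_snd',
    ContinuousLinearMap.smul_apply, ContinuousLinearMap.inl_apply,
    ContinuousLinearMap.inr_apply, hg0]
  rw [Prod.ext_iff]
  constructor
  · -- A (u, τ • w) = A (u, 0) + τ • A (0, w)
    show A (u, τ • w) = A (u, 0) + τ • A (0, w)
    have hsplit : ((u, τ • w) : (Fin n → ℝ) × (Fin m → ℝ))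
        = (u, (0 : Fin m → ℝ)) + τ • ((0 : Fin n → ℝ), w) := by
      simp [Prod.ext_iff]
    rw [hsplit, map_add, map_smul]
  · -- ∑ i, w i • B (0, Pi.single i 1) = B (0, w)
    show (∑ i : Fin m, w i • B (0, Pi.single i 1)) = B (0, w)
    have h1 : ∀ i : Fin m, w i • B ((0 : Fin n → ℝ), Pi.single i 1)
        = B ((0 : Fin n → ℝ), Pi.single i (w i)) := by
      intro i
      rw [← map_smul, ← hsmul]
      congr 1
      rw [Prod.ext_iff]
      refine ⟨rfl, ?_⟩
      rw [← Pi.single_smul, smul_eq_mul, mul_one]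
    simp only [h1]
    rw [← map_sum]
    congr 1
    rw [Prod.ext_iff]
    constructor
    · simp [Prod.fst_sum]
    · simp [Prod.snd_sum, Finset.univ_sum_single]
end

section
/- Let U ⊆ ℝⁿ × ℝᵐ be open, a : U → ℝ^p a C¹ map, and K ⊆ U a compact set that is star-shaped along fibers, i.e. (x, s·v) ∈ K whenever (x, v) ∈ K and s ∈ [0, 1]. Let δ > 0 and let c : ℝᵐ → [0, 1] be any function with c(v) = 1 whenever ‖v‖ ≥ δ. Then for every (x, v) ∈ K one has ‖a(x, v) − a(x, c(v)·v)‖ ≤ δ · M, where M = sup_{(y,w) ∈ K} ‖D₂a(y, w)‖ is the supremum over K of the operator norm of the partial Fréchet derivative of a in the second (ℝᵐ) variable. -/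
open scoped Topology

/-- C⁰-estimate for the linearizing deformation of the base component: if `a` is `C¹` on an
open set `U`, `K ⊆ U` is compact and star-shaped along fibers, `0 < δ`, and `c : ℝᵐ → [0,1]`
equals `1` outside the `δ`-tube, then `‖a(x,v) − a(x, c(v)·v)‖ ≤ δ·M` on `K`, where `M` is the
sup over `K` of the operator norm of the partial derivative of `a` in the fiber variable. -/
theorem linearizing_deformation_C0_estimate
    {n m p : ℕ} (hn : 0 < n) (hm : 0 < m) (hp : 0 < p)
    (U : Set (EuclideanSpace ℝ (Fin n) × EuclideanSpace ℝ (Fin m))) (hU : IsOpen U)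
    (a : EuclideanSpace ℝ (Fin n) × EuclideanSpace ℝ (Fin m) → EuclideanSpace ℝ (Fin p))
    (ha : ContDiffOn ℝ 1 a U)
    (K : Set (EuclideanSpace ℝ (Fin n) × EuclideanSpace ℝ (Fin m)))
    (hK : IsCompact K) (hKU : K ⊆ U)
    (hstar : ∀ z ∈ K, ∀ s ∈ Set.Icc (0:ℝ) 1,
      ((z : EuclideanSpace ℝ (Fin n) × EuclideanSpace ℝ (Fin m)).1, s • z.2) ∈ K)
    (δ : ℝ) (hδ : 0 < δ)
    (c : EuclideanSpace ℝ (Fin m) → ℝ)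
    (hc : ∀ v, c v ∈ Set.Icc (0:ℝ) 1)
    (hc1 : ∀ v : EuclideanSpace ℝ (Fin m), δ ≤ ‖v‖ → c v = 1) :
    ∀ x : EuclideanSpace ℝ (Fin n), ∀ v : EuclideanSpace ℝ (Fin m), (x, v) ∈ K →
      ‖a (x, v) - a (x, c v • v)‖ ≤
        δ * ⨆ z : K, ‖fderiv ℝ (fun w : EuclideanSpace ℝ (Fin m) => a (z.1.1, w)) z.1.2‖ := by
  intro x v hxv
  set M : ℝ := ⨆ z : K, ‖fderiv ℝ (fun w : EuclideanSpace ℝ (Fin m) => a (z.1.1, w)) z.1.2‖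
    with hM
  -- differentiability of `a` at points of `K`
  have hdiff : ∀ z ∈ K, HasFDerivAt a (fderiv ℝ a z) z := fun z hz => by
    have : DifferentiableAt ℝ a z :=
      ((ha.contDiffAt (hU.mem_nhds (hKU hz))).differentiableAt one_ne_zero)
    exact this.hasFDerivAt
  -- the partial derivative formula and bound
  have hpart : ∀ z ∈ K,
      HasFDerivAt (fun w : EuclideanSpace ℝ (Fin m) => a (z.1, w))
        ((fderiv ℝ a z).comp (ContinuousLinearMap.inr ℝ _ _)) z.2 := fun z hz =>
    (hdiff z hz).comp z.2 (hasFDerivAt_prodMk_right z.1 z.2)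
  have hpartnorm : ∀ z ∈ K,
      ‖fderiv ℝ (fun w : EuclideanSpace ℝ (Fin m) => a (z.1, w)) z.2‖ ≤ ‖fderiv ℝ a z‖ := by
    intro z hz
    rw [(hpart z hz).fderiv]
    refine ContinuousLinearMap.opNorm_le_bound _ (norm_nonneg _) fun w => ?_
    calc ‖(fderiv ℝ a z) ((0 : EuclideanSpace ℝ (Fin n)), w)‖
        ≤ ‖fderiv ℝ a z‖ * ‖((0 : EuclideanSpace ℝ (Fin n)), w)‖ :=
          (fderiv ℝ a z).le_opNorm _
      _ ≤ ‖fderiv ℝ a z‖ * ‖w‖ := by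
          gcongr
          simp [Prod.norm_def]
  -- `M` is a sup of a bounded family
  have hcont : ContinuousOn (fun z => ‖fderiv ℝ a z‖) K :=
    ((ha.continuousOn_fderiv_of_isOpen hU le_rfl).mono hKU).norm
  obtain ⟨C, hC⟩ : ∃ C, ∀ z ∈ K, ‖fderiv ℝ a z‖ ≤ C := by
    rcases hK.exists_bound_of_continuousOn hcont with ⟨C, hC⟩
    exact ⟨C, fun z hz => (le_abs_self _).trans (by simpa using hC z hz)⟩
  have hbdd : BddAbove (Set.range fun z : K =>
      ‖fderiv ℝ (fun w : EuclideanSpace ℝ (Fin m) => a (z.1.1, w)) z.1.2‖) := by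
    refine ⟨C, ?_⟩
    rintro r ⟨z, rfl⟩
    exact (hpartnorm z z.2).trans (hC z z.2)
  have hMnonneg : 0 ≤ M := Real.iSup_nonneg fun z => norm_nonneg _
  have hle : ∀ z ∈ K,
      ‖fderiv ℝ (fun w : EuclideanSpace ℝ (Fin m) => a (z.1, w)) z.2‖ ≤ M := fun z hz =>
    le_ciSup hbdd (⟨z, hz⟩ : K)
  by_cases hvδ : δ ≤ ‖v‖
  · rw [hc1 v hvδ, one_smul, sub_self, norm_zero]
    positivity
  push_neg at hvδ
  -- the path `g s = a (x, s • v)`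
  set g : ℝ → EuclideanSpace ℝ (Fin p) := fun s => a (x, s • v) with hg
  have hgderiv : ∀ s ∈ Set.Icc (0:ℝ) 1,
      HasDerivWithinAt g ((fderiv ℝ a (x, s • v)) ((0 : EuclideanSpace ℝ (Fin n)), v))
        (Set.Icc (0:ℝ) 1) s := by
    intro s hs
    have hmem : (x, s • v) ∈ K := hstar (x, v) hxv s hs
    have h1 : HasDerivAt (fun t : ℝ => ((x, t • v) :
        EuclideanSpace ℝ (Fin n) × EuclideanSpace ℝ (Fin m)))
        ((0 : EuclideanSpace ℝ (Fin n)), v) s := by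
      have := ((hasDerivAt_id s).smul_const v)
      simpa using HasDerivAt.prodMk (hasDerivAt_const s x) this
    exact ((hdiff _ hmem).comp_hasDerivAt s h1).hasDerivWithinAt
  have hbound : ∀ s ∈ Set.Icc (0:ℝ) 1,
      ‖(fderiv ℝ a (x, s • v)) ((0 : EuclideanSpace ℝ (Fin n)), v)‖ ≤ M * ‖v‖ := by
    intro s hs
    have hmem : (x, s • v) ∈ K := hstar (x, v) hxv s hs
    have heq : (fderiv ℝ a (x, s • v)) ((0 : EuclideanSpace ℝ (Fin n)), v)
        = (fderiv ℝ (fun w : EuclideanSpace ℝ (Fin m) => a (x, w)) (s • v)) v := by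
      rw [(hpart (x, s • v) hmem).fderiv]; rfl
    rw [heq]
    calc ‖(fderiv ℝ (fun w : EuclideanSpace ℝ (Fin m) => a (x, w)) (s • v)) v‖
        ≤ ‖fderiv ℝ (fun w : EuclideanSpace ℝ (Fin m) => a (x, w)) (s • v)‖ * ‖v‖ :=
          ContinuousLinearMap.le_opNorm _ _
      _ ≤ M * ‖v‖ := by
          gcongr
          exact hle (x, s • v) hmem
  have hmvt : ‖g 1 - g (c v)‖ ≤ (M * ‖v‖) * ‖(1:ℝ) - c v‖ :=
    (convex_Icc (0:ℝ) 1).norm_image_sub_le_of_norm_hasDerivWithin_le hgderiv hbound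
      (hc v) (Set.mem_Icc.2 ⟨zero_le_one, le_refl 1⟩)
  have h1cv : ‖(1:ℝ) - c v‖ ≤ 1 := by
    rcases hc v with ⟨h0, h1⟩
    rw [Real.norm_eq_abs, abs_of_nonneg (by linarith)]
    linarith
  have : ‖a (x, v) - a (x, c v • v)‖ ≤ (M * ‖v‖) * ‖(1:ℝ) - c v‖ := by
    simpa [hg, one_smul] using hmvt
  calc ‖a (x, v) - a (x, c v • v)‖ ≤ (M * ‖v‖) * ‖(1:ℝ) - c v‖ := this
    _ ≤ (M * δ) * 1 :=
        mul_le_mul (mul_le_mul_of_nonneg_left hvδ.le hMnonneg) h1cv (norm_nonneg _)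
          (by positivity)
    _ = δ * M := by ring
end

section
/- Let U ⊆ ℝⁿ × ℝᵐ be open, b : U → ℝ^q a C² map with b(x, 0) = 0 for all (x, 0) ∈ U, and K ⊆ U a compact set that is star-shaped along fibers, i.e. (x, s·v) ∈ K whenever (x, v) ∈ K and s ∈ [0, 1]. Let δ > 0 and let c : ℝᵐ → [0, 1] be any function with c(v) = 1 whenever ‖v‖ ≥ δ. Then for every (x, v) ∈ K one has ‖ b(x, v) − Σ_{i=1}^{m} vᵢ · ∫_0^1 (∂b/∂vᵢ)(x, s·c(v)·v) ds ‖ ≤ δ² · M₂, where M₂ = sup_{(y,w) ∈ K} ‖D₂²b(y, w)‖ is the supremum over K of the norm of the second partial Fréchet derivative of b in the second (ℝᵐ) variable. -/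
set_option maxHeartbeats 2000000

open Set MeasureTheory intervalIntegral

section Aux
variable {E F G : Type*} [NormedAddCommGroup E] [NormedSpace ℝ E]
  [NormedAddCommGroup F] [NormedSpace ℝ F]
  [NormedAddCommGroup G] [NormedSpace ℝ G] [CompleteSpace G]

lemma aux_second_order_estimate
    (U : Set (E × F)) (hU : IsOpen U)
    (b : E × F → G) (hb : ContDiffOn ℝ 2 b U)
    (hb0 : ∀ x : E, (x, (0:F)) ∈ U → b (x, 0) = 0)
    (K : Set (E × F)) (hK : IsCompact K) (hKU : K ⊆ U)
    (hstar : ∀ z ∈ K, ∀ s ∈ Set.Icc (0:ℝ) 1, (z.1, s • z.2) ∈ K)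
    (δ : ℝ) (hδ : 0 < δ)
    (t : ℝ) (ht : t ∈ Set.Icc (0:ℝ) 1)
    (x : E) (v : F) (hxv : (x, v) ∈ K)
    (ht1 : δ ≤ ‖v‖ → t = 1)
    {ι : Type*} (fs : Finset ι) (cc : ι → ℝ) (u : ι → F)
    (hdec : (∑ i ∈ fs, cc i • u i) = v) :
    ‖b (x, v) - ∑ i ∈ fs, cc i •
        ∫ s in (0:ℝ)..1, fderiv ℝ (fun w : F => b (x, w)) (s • (t • v)) (u i)‖ ≤
      δ ^ 2 * ⨆ z : K,
        ‖fderiv ℝ (fun w : F => fderiv ℝ (fun w' : F => b (z.1.1, w')) w) z.1.2‖ := by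
  have hB : ContDiffOn ℝ 1 (fderiv ℝ b) U :=
    hb.fderiv_of_isOpen hU (by norm_num)
  have hBc : ContinuousOn (fderiv ℝ b) U := hB.continuousOn
  have hBd : DifferentiableOn ℝ (fderiv ℝ b) U := hB.differentiableOn one_ne_zero
  have hB'c : ContinuousOn (fderiv ℝ (fderiv ℝ b)) U :=
    hB.continuousOn_fderiv_of_isOpen hU le_rfl
  have hbd : DifferentiableOn ℝ b U := hb.differentiableOn (by norm_num)
  set P : ((E × F) →L[ℝ] G) →L[ℝ] (F →L[ℝ] G) :=
    (ContinuousLinearMap.compL ℝ F (E × F) G).flip (ContinuousLinearMap.inr ℝ E F) with hPdef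
  have hP : ∀ A : (E × F) →L[ℝ] G, P A = A.comp (ContinuousLinearMap.inr ℝ E F) := fun A => rfl
  -- partial derivative identity
  have hDg : ∀ y : E, ∀ w : F, (y, w) ∈ U →
      HasFDerivAt (fun w' : F => b (y, w')) (P (fderiv ℝ b (y, w))) w := by
    intro y w hw
    have hdb : HasFDerivAt b (fderiv ℝ b (y, w)) (y, w) :=
      (hbd.differentiableAt (hU.mem_nhds hw)).hasFDerivAt
    exact hdb.comp w (hasFDerivAt_prodMk_right y w)
  have hDg' : ∀ y w, (y, w) ∈ U →
      fderiv ℝ (fun w' : F => b (y, w')) w = P (fderiv ℝ b (y, w)) :=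
    fun y w hw => (hDg y w hw).fderiv
  -- second partial derivative identity
  have hΦ : ∀ y : E, ∀ w : F, (y, w) ∈ U →
      HasFDerivAt (fun w' : F => fderiv ℝ (fun w'' : F => b (y, w'')) w')
        (P.comp ((fderiv ℝ (fderiv ℝ b) (y, w)).comp (ContinuousLinearMap.inr ℝ E F))) w := by
    intro y w hw
    have hdB : HasFDerivAt (fderiv ℝ b) (fderiv ℝ (fderiv ℝ b) (y, w)) (y, w) :=
      (hBd.differentiableAt (hU.mem_nhds hw)).hasFDerivAt
    have h1 : HasFDerivAt (fun w' : F => fderiv ℝ b (y, w'))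
        ((fderiv ℝ (fderiv ℝ b) (y, w)).comp (ContinuousLinearMap.inr ℝ E F)) w :=
      hdB.comp w (hasFDerivAt_prodMk_right y w)
    have h2 : HasFDerivAt (fun w' : F => P (fderiv ℝ b (y, w')))
        (P.comp ((fderiv ℝ (fderiv ℝ b) (y, w)).comp (ContinuousLinearMap.inr ℝ E F))) w :=
      P.hasFDerivAt.comp w h1
    refine h2.congr_of_eventuallyEq ?_
    have hV : IsOpen {w' : F | (y, w') ∈ U} := hU.preimage (Continuous.prodMk_right y)
    filter_upwards [hV.mem_nhds hw] with w' hw'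
    exact hDg' y w' hw'
  -- norm bound for the composite second derivative
  have hDnorm : ∀ A : (E × F) →L[ℝ] (E × F) →L[ℝ] G,
      ‖P.comp (A.comp (ContinuousLinearMap.inr ℝ E F))‖ ≤ ‖A‖ := by
    intro A
    refine ContinuousLinearMap.opNorm_le_bound _ (norm_nonneg A) fun u' => ?_
    refine ContinuousLinearMap.opNorm_le_bound _ (by positivity) fun w => ?_
    have h0 : (P.comp (A.comp (ContinuousLinearMap.inr ℝ E F))) u' w
        = A ((0:E), u') ((0:E), w) := rfl
    rw [h0]
    have hu' : ‖((0:E), u')‖ = ‖u'‖ := by simp [Prod.norm_def]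
    have hw : ‖((0:E), w)‖ = ‖w‖ := by simp [Prod.norm_def]
    calc ‖A ((0:E), u') ((0:E), w)‖ ≤ ‖A ((0:E), u')‖ * ‖((0:E), w)‖ :=
          ContinuousLinearMap.le_opNorm _ _
      _ ≤ ‖A‖ * ‖((0:E), u')‖ * ‖((0:E), w)‖ := by
          gcongr; exact ContinuousLinearMap.le_opNorm _ _
      _ = ‖A‖ * ‖u'‖ * ‖w‖ := by rw [hu', hw]
  set M₂ := ⨆ z : K,
      ‖fderiv ℝ (fun w : F => fderiv ℝ (fun w' : F => b (z.1.1, w')) w) z.1.2‖ with hM₂def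
  obtain ⟨C, hC⟩ := hK.exists_bound_of_continuousOn (f := fderiv ℝ (fderiv ℝ b)) (hB'c.mono hKU)
  have hΦle : ∀ z ∈ K,
      ‖fderiv ℝ (fun w : F => fderiv ℝ (fun w' : F => b (z.1, w')) w) z.2‖ ≤ C := by
    intro z hz
    have hzU : (z.1, z.2) ∈ U := hKU hz
    rw [(hΦ z.1 z.2 hzU).fderiv]
    exact le_trans (hDnorm _) (hC z hz)
  have hbdd : BddAbove (Set.range fun z : K =>
      ‖fderiv ℝ (fun w : F => fderiv ℝ (fun w' : F => b (z.1.1, w')) w) z.1.2‖) := by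
    refine ⟨C, ?_⟩
    rintro r ⟨z, rfl⟩
    exact hΦle z.1 z.2
  have hM₂le : ∀ z ∈ K,
      ‖fderiv ℝ (fun w : F => fderiv ℝ (fun w' : F => b (z.1, w')) w) z.2‖ ≤ M₂ :=
    fun z hz => le_ciSup hbdd (⟨z, hz⟩ : K)
  have hM₂0 : 0 ≤ M₂ := le_trans (norm_nonneg (fderiv ℝ (fun w : F => fderiv ℝ (fun w' : F => b ((x, v).1, w')) w) (x, v).2)) (hM₂le (x, v) hxv)
  -- membership along fibers
  have hsK : ∀ s ∈ Icc (0:ℝ) 1, (x, s • v) ∈ K := fun s hs => hstar (x, v) hxv s hs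
  have htK : ∀ s ∈ Icc (0:ℝ) 1, (x, s • (t • v)) ∈ K := by
    intro s hs
    rw [smul_smul]
    exact hstar (x, v) hxv (s * t)
      ⟨mul_nonneg hs.1 ht.1, by nlinarith [hs.1, hs.2, ht.1, ht.2]⟩
  have hsU : ∀ s ∈ Icc (0:ℝ) 1, (x, s • v) ∈ U := fun s hs => hKU (hsK s hs)
  have htU : ∀ s ∈ Icc (0:ℝ) 1, (x, s • (t • v)) ∈ U := fun s hs => hKU (htK s hs)
  -- integrability
  have hInt : ∀ w₀ : F, (∀ s ∈ Icc (0:ℝ) 1, (x, s • w₀) ∈ U) → ∀ u' : F,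
      IntervalIntegrable (fun s : ℝ => fderiv ℝ (fun w : F => b (x, w)) (s • w₀) u')
        volume 0 1 := by
    intro w₀ hw₀ u'
    have hmap : MapsTo (fun s : ℝ => ((x, s • w₀) : E × F)) (Icc 0 1) U :=
      fun s hs => hw₀ s hs
    have h1 : ContinuousOn (fun s : ℝ => fderiv ℝ b (x, s • w₀)) (Icc 0 1) :=
      hBc.comp (by fun_prop) hmap
    have h2 : ContinuousOn (fun s : ℝ => P (fderiv ℝ b (x, s • w₀)) u') (Icc 0 1) :=
      ((ContinuousLinearMap.apply ℝ G u').continuous.comp P.continuous).comp_continuousOn h1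
    have h3 : ContinuousOn (fun s : ℝ => fderiv ℝ (fun w : F => b (x, w)) (s • w₀) u')
        (Icc 0 1) := by
      refine h2.congr fun s hs => ?_
      rw [hDg' x (s • w₀) (hw₀ s hs)]
    rw [show Icc (0:ℝ) 1 = uIcc 0 1 from (uIcc_of_le zero_le_one).symm] at h3
    exact h3.intervalIntegrable
  -- FTC
  have hFTC : ∀ w₀ : F, (∀ s ∈ Icc (0:ℝ) 1, (x, s • w₀) ∈ U) →
      (∫ s in (0:ℝ)..1, fderiv ℝ (fun w : F => b (x, w)) (s • w₀) w₀)
        = b (x, w₀) - b (x, 0) := by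
    intro w₀ hw₀
    have hderiv : ∀ s ∈ uIcc (0:ℝ) 1, HasDerivAt (fun s : ℝ => b (x, s • w₀))
        (fderiv ℝ (fun w : F => b (x, w)) (s • w₀) w₀) s := by
      intro s hs
      rw [uIcc_of_le zero_le_one] at hs
      have h1 : HasFDerivAt (fun w : F => b (x, w))
          (fderiv ℝ (fun w : F => b (x, w)) (s • w₀)) (s • w₀) :=
        (hDg x (s • w₀) (hw₀ s hs)).differentiableAt.hasFDerivAt
      have h2 : HasDerivAt (fun s : ℝ => s • w₀) w₀ s := by
        simpa using (hasDerivAt_id s).smul_const w₀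
      exact h1.comp_hasDerivAt s h2
    have := integral_eq_sub_of_hasDerivAt hderiv (hInt w₀ hw₀ w₀)
    simpa using this
  have h0U : (x, (0:F)) ∈ U := by
    have := hsK 0 ⟨le_rfl, zero_le_one⟩
    rw [zero_smul] at this
    exact hKU this
  have e1 : b (x, v) = ∫ s in (0:ℝ)..1, fderiv ℝ (fun w : F => b (x, w)) (s • v) v := by
    rw [hFTC v hsU, hb0 x h0U, sub_zero]
  -- sum to integral
  have e2 : (∑ i ∈ fs, cc i •
      ∫ s in (0:ℝ)..1, fderiv ℝ (fun w : F => b (x, w)) (s • (t • v)) (u i))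
      = ∫ s in (0:ℝ)..1, fderiv ℝ (fun w : F => b (x, w)) (s • (t • v)) v := by
    have : ∀ i ∈ fs, cc i •
        (∫ s in (0:ℝ)..1, fderiv ℝ (fun w : F => b (x, w)) (s • (t • v)) (u i))
        = ∫ s in (0:ℝ)..1, cc i • fderiv ℝ (fun w : F => b (x, w)) (s • (t • v)) (u i) :=
      fun i _ => (intervalIntegral.integral_smul (cc i) _).symm
    rw [Finset.sum_congr rfl this]
    rw [← intervalIntegral.integral_finset_sum
      (f := fun i s => cc i • fderiv ℝ (fun w : F => b (x, w)) (s • (t • v)) (u i))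
      (fun i _ => (hInt (t • v) htU (u i)).smul (cc i))]
    congr 1
    ext s
    rw [← hdec]
    simp [_root_.map_sum, _root_.map_smul]
  rw [e2, e1]
  rw [← intervalIntegral.integral_sub (hInt v hsU v) (hInt (t • v) htU v)]
  -- pointwise bound
  have hbound : ∀ s ∈ Set.uIoc (0:ℝ) 1,
      ‖fderiv ℝ (fun w : F => b (x, w)) (s • v) v
        - fderiv ℝ (fun w : F => b (x, w)) (s • (t • v)) v‖
        ≤ M₂ * ((1 - t) * ‖v‖) * ‖v‖ := by
    intro s hs
    rw [uIoc_of_le zero_le_one] at hs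
    have hs' : s ∈ Icc (0:ℝ) 1 := ⟨le_of_lt hs.1, hs.2⟩
    have hseg : ∀ w ∈ segment ℝ (s • (t • v)) (s • v), (x, w) ∈ K := by
      rintro w ⟨u1, u2, hu1, hu2, huu, rfl⟩
      have hrw : u1 • s • t • v + u2 • s • v = (u1 * (s * t) + u2 * s) • v := by
        module
      rw [hrw]
      have h1 : (0:ℝ) ≤ s * t := mul_nonneg hs'.1 ht.1
      have h2 : s * t ≤ 1 := by nlinarith [hs'.1, hs'.2, ht.1, ht.2]
      refine hstar (x, v) hxv _ ⟨?_, ?_⟩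
      · exact add_nonneg (mul_nonneg hu1 h1) (mul_nonneg hu2 hs'.1)
      · have h3 : u1 * (s * t) ≤ u1 := mul_le_of_le_one_right hu1 h2
        have h4 : u2 * s ≤ u2 := mul_le_of_le_one_right hu2 hs'.2
        linarith
    have hmv := Convex.norm_image_sub_le_of_norm_hasFDerivWithin_le
      (f := fun w : F => fderiv ℝ (fun w' : F => b (x, w')) w)
      (f' := fun w : F =>
        fderiv ℝ (fun w' : F => fderiv ℝ (fun w'' : F => b (x, w'')) w') w)
      (C := M₂) (s := segment ℝ (s • (t • v)) (s • v))
      (fun w hw =>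
        ((hΦ x w (hKU (hseg w hw))).differentiableAt.hasFDerivAt).hasFDerivWithinAt)
      (fun w hw => hM₂le (x, w) (hseg w hw))
      (convex_segment _ _) (left_mem_segment ℝ _ _) (right_mem_segment ℝ _ _)
    have hdiff : ‖s • v - s • (t • v)‖ ≤ (1 - t) * ‖v‖ := by
      have hrw : s • v - s • (t • v) = (s * (1 - t)) • v := by module
      have hst : (0:ℝ) ≤ s * (1 - t) := by nlinarith [hs'.1, ht.2]
      have hst' : s * (1 - t) ≤ 1 - t := by nlinarith [hs'.1, hs'.2, ht.1, ht.2]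
      rw [hrw, norm_smul, Real.norm_eq_abs, abs_of_nonneg hst]
      exact mul_le_mul_of_nonneg_right hst' (norm_nonneg v)
    calc ‖fderiv ℝ (fun w : F => b (x, w)) (s • v) v
          - fderiv ℝ (fun w : F => b (x, w)) (s • (t • v)) v‖
        = ‖(fderiv ℝ (fun w : F => b (x, w)) (s • v)
            - fderiv ℝ (fun w : F => b (x, w)) (s • (t • v))) v‖ := by
          rw [ContinuousLinearMap.sub_apply]
      _ ≤ ‖fderiv ℝ (fun w : F => b (x, w)) (s • v)
            - fderiv ℝ (fun w : F => b (x, w)) (s • (t • v))‖ * ‖v‖ :=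
          ContinuousLinearMap.le_opNorm _ _
      _ ≤ (M₂ * ‖s • v - s • (t • v)‖) * ‖v‖ :=
          mul_le_mul_of_nonneg_right hmv (norm_nonneg v)
      _ ≤ (M₂ * ((1 - t) * ‖v‖)) * ‖v‖ := by gcongr
  have hfinal := intervalIntegral.norm_integral_le_of_norm_le_const hbound
  have habs : |(1:ℝ) - 0| = 1 := by norm_num
  rw [habs, mul_one] at hfinal
  refine hfinal.trans ?_
  by_cases hvδ : δ ≤ ‖v‖
  · rw [ht1 hvδ]
    have hz : M₂ * ((1 - 1) * ‖v‖) * ‖v‖ = 0 := by ring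
    rw [hz]
    exact mul_nonneg (by positivity) hM₂0
  · push_neg at hvδ
    have hv1 : (1 - t) * ‖v‖ ≤ δ := by
      have h5 : (1 - t) * ‖v‖ ≤ 1 * ‖v‖ :=
        mul_le_mul_of_nonneg_right (by linarith [ht.1]) (norm_nonneg v)
      rw [one_mul] at h5
      linarith
    have hv2 : ‖v‖ ≤ δ := hvδ.le
    have h6 : M₂ * ((1 - t) * ‖v‖) ≤ M₂ * δ := mul_le_mul_of_nonneg_left hv1 hM₂0
    have h7 : M₂ * ((1 - t) * ‖v‖) * ‖v‖ ≤ M₂ * δ * δ :=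
      mul_le_mul h6 hv2 (norm_nonneg v) (mul_nonneg hM₂0 hδ.le)
    calc M₂ * ((1 - t) * ‖v‖) * ‖v‖ ≤ M₂ * δ * δ := h7
      _ = δ ^ 2 * M₂ := by ring
end Aux

/-- Second-order estimate for the fiberwise part of the linearizing deformation: if `b` is `C²`
on an open set `U`, vanishes on the zero section, `K ⊆ U` is compact and star-shaped along
fibers, `0 < δ`, and `c : ℝᵐ → [0,1]` equals `1` outside the `δ`-tube, then
`‖b(x,v) − Σᵢ vᵢ ∫_0^1 ∂b/∂vᵢ(x, s·c(v)·v) ds‖ ≤ δ²·M₂` on `K`, where `M₂` is the sup over `K`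
of the norm of the second partial derivative of `b` in the fiber variable. -/
theorem linearizing_deformation_second_order_estimate
    {n m q : ℕ} (hn : 0 < n) (hm : 0 < m) (hq : 0 < q)
    (U : Set (EuclideanSpace ℝ (Fin n) × EuclideanSpace ℝ (Fin m))) (hU : IsOpen U)
    (b : EuclideanSpace ℝ (Fin n) × EuclideanSpace ℝ (Fin m) → EuclideanSpace ℝ (Fin q))
    (hb : ContDiffOn ℝ 2 b U)
    (hb0 : ∀ x : EuclideanSpace ℝ (Fin n), (x, (0 : EuclideanSpace ℝ (Fin m))) ∈ U →
      b (x, 0) = 0)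
    (K : Set (EuclideanSpace ℝ (Fin n) × EuclideanSpace ℝ (Fin m)))
    (hK : IsCompact K) (hKU : K ⊆ U)
    (hstar : ∀ z ∈ K, ∀ s ∈ Set.Icc (0:ℝ) 1,
      ((z : EuclideanSpace ℝ (Fin n) × EuclideanSpace ℝ (Fin m)).1, s • z.2) ∈ K)
    (δ : ℝ) (hδ : 0 < δ)
    (c : EuclideanSpace ℝ (Fin m) → ℝ)
    (hc : ∀ v, c v ∈ Set.Icc (0:ℝ) 1)
    (hc1 : ∀ v : EuclideanSpace ℝ (Fin m), δ ≤ ‖v‖ → c v = 1) :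
    ∀ x : EuclideanSpace ℝ (Fin n), ∀ v : EuclideanSpace ℝ (Fin m), (x, v) ∈ K →
      ‖b (x, v) - ∑ i : Fin m, v i •
          ∫ s in (0:ℝ)..1,
            fderiv ℝ (fun w : EuclideanSpace ℝ (Fin m) => b (x, w)) (s • (c v • v))
              (EuclideanSpace.single i 1)‖ ≤
        δ ^ 2 * ⨆ z : K,
          ‖fderiv ℝ
              (fun w : EuclideanSpace ℝ (Fin m) =>
                fderiv ℝ (fun w' : EuclideanSpace ℝ (Fin m) => b (z.1.1, w')) w)
              z.1.2‖ := by
  intro x v hxv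
  have hdec : ∑ i : Fin m, v i • EuclideanSpace.single i (1:ℝ) = v := by
    have h := (EuclideanSpace.basisFun (Fin m) ℝ).sum_repr v
    simpa [EuclideanSpace.basisFun_apply, EuclideanSpace.basisFun_repr] using h
  exact aux_second_order_estimate U hU b hb hb0 K hK hKU hstar δ hδ (c v) (hc v)
    x v hxv (hc1 v) Finset.univ (fun i => v i) (fun i => EuclideanSpace.single i 1) hdec
end

section
/- Let B be a locally path-connected topological space, m ≥ 1 an integer, k > 0 a real number, and f : B × ℝᵐ → ℝ a continuous function that is fiberwise homogeneous of degree k, i.e. f(b, τ·v) = τ^k · f(b, v) for all τ > 0, b ∈ B, v ∈ ℝᵐ. Assume: (i) there exist a < 0 and b > 0 such that every path component of f⁻¹(a) and every path component of f⁻¹(b) is closed in B × ℝᵐ; (ii) the subspace f⁻¹(0) ∖ (B × {0}) is locally path connected. Then for every leaf ω of the (f, B)-partition, the set cl(ω) ∖ ω is contained in B × {0}; moreover for every c ≠ 0, every path component of f⁻¹(c) is closed in B × ℝᵐ. -/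
open Set

lemma homeo_image_pathComponentIn {X Y : Type*} [TopologicalSpace X] [TopologicalSpace Y]
    (e : X ≃ₜ Y) (x : X) (F : Set X) :
    e '' pathComponentIn F x = pathComponentIn (e '' F) (e x) := by
  ext y
  constructor
  · rintro ⟨q, hq, rfl⟩
    exact hq.map e.continuous
  · intro h
    refine ⟨e.symm y, ?_, e.apply_symm_apply y⟩
    have h' := (h : JoinedIn (e '' F) (e x) y).map e.symm.continuous
    show JoinedIn F x (e.symm y)
    simpa [Set.image_image] using h'

lemma pathComponentIn_eq_image_subtype {X : Type*} [TopologicalSpace X]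
    (F : Set X) (x : X) (hx : x ∈ F) :
    pathComponentIn F x = Subtype.val '' pathComponent (⟨x, hx⟩ : F) := by
  ext y
  constructor
  · intro (h : JoinedIn F x y)
    exact ⟨⟨y, h.target_mem⟩, h.joined_subtype, rfl⟩
  · rintro ⟨⟨y, hy⟩, h, rfl⟩
    exact (joinedIn_iff_joined hx hy).mpr h

/-- For a continuous fiberwise homogeneous function `f : B × ℝᵐ → ℝ` of degree `k > 0` over a
locally path-connected base, if for some `a < 0` and `b > 0` all path components of `f⁻¹(a)`
and `f⁻¹(b)` are closed, and `f⁻¹(0) ∖ (B × {0})` is locally path connected, then every leaf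
`ω` of the `(f, B)`-partition satisfies `cl(ω) ∖ ω ⊆ B × {0}`, and for every `c ≠ 0` all path
components of `f⁻¹(c)` are closed in `B × ℝᵐ`. -/
theorem homogeneous_partition_limit_points
    {B : Type*} [TopologicalSpace B] [LocallyPathConnectedSpace B]
    {m : ℕ} (hm : 1 ≤ m) (k : ℝ) (hk : 0 < k)
    (f : B × (Fin m → ℝ) → ℝ) (hf : Continuous f)
    (hhom : ∀ τ : ℝ, 0 < τ → ∀ (b : B) (v : Fin m → ℝ), f (b, τ • v) = τ ^ k * f (b, v))
    (a b : ℝ) (ha : a < 0) (hb : 0 < b)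
    (hclosed_a : ∀ p ∈ f ⁻¹' {a}, IsClosed (pathComponentIn (f ⁻¹' {a}) p))
    (hclosed_b : ∀ p ∈ f ⁻¹' {b}, IsClosed (pathComponentIn (f ⁻¹' {b}) p))
    (hlpc : LocallyPathConnectedSpace
      ↥(f ⁻¹' {0} \ {z : B × (Fin m → ℝ) | z.2 = 0})) :
    (∀ p : B × (Fin m → ℝ), p.2 = 0 →
        closure (pathComponentIn {z : B × (Fin m → ℝ) | z.2 = 0} p)
            \ pathComponentIn {z : B × (Fin m → ℝ) | z.2 = 0} p
          ⊆ {z : B × (Fin m → ℝ) | z.2 = 0})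
    ∧ (∀ c : ℝ, ∀ p ∈ f ⁻¹' {c} \ {z : B × (Fin m → ℝ) | z.2 = 0},
        closure (pathComponentIn (f ⁻¹' {c} \ {z : B × (Fin m → ℝ) | z.2 = 0}) p)
            \ pathComponentIn (f ⁻¹' {c} \ {z : B × (Fin m → ℝ) | z.2 = 0}) p
          ⊆ {z : B × (Fin m → ℝ) | z.2 = 0})
    ∧ (∀ c : ℝ, c ≠ 0 → ∀ p ∈ f ⁻¹' {c}, IsClosed (pathComponentIn (f ⁻¹' {c}) p)) := by
  -- f vanishes on the zero section
  have f0 : ∀ x : B, f (x, 0) = 0 := by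
    intro x
    have h2 := hhom 2 two_pos x 0
    rw [smul_zero] at h2
    have h2k : (1 : ℝ) < (2 : ℝ) ^ k :=
      Real.one_lt_rpow_iff_of_pos two_pos |>.mpr (Or.inl ⟨one_lt_two, hk⟩)
    nlinarith [h2]
  -- part 3
  have part3 : ∀ c : ℝ, c ≠ 0 → ∀ p ∈ f ⁻¹' {c}, IsClosed (pathComponentIn (f ⁻¹' {c}) p) := by
    intro c hc p hp
    obtain ⟨d, hdcl, hdc⟩ :
        (∃ d : ℝ, (∀ q ∈ f ⁻¹' {d}, IsClosed (pathComponentIn (f ⁻¹' {d}) q)) ∧ 0 < d / c) := by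
      rcases lt_or_gt_of_ne hc with hneg | hpos
      · exact ⟨a, hclosed_a, div_pos_of_neg_of_neg ha hneg⟩
      · exact ⟨b, hclosed_b, div_pos hb hpos⟩
    set τ : ℝ := (d / c) ^ (k⁻¹) with hτdef
    have hτ : 0 < τ := Real.rpow_pos_of_pos hdc _
    have hτk : τ ^ k = d / c := by
      rw [hτdef, ← Real.rpow_mul hdc.le, inv_mul_cancel₀ hk.ne', Real.rpow_one]
    let e : (B × (Fin m → ℝ)) ≃ₜ (B × (Fin m → ℝ)) :=
      (Homeomorph.refl B).prodCongr (Homeomorph.smulOfNeZero τ hτ.ne')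
    have he_apply : ∀ z : B × (Fin m → ℝ), e z = (z.1, τ • z.2) := fun z => rfl
    have he_symm : ∀ z : B × (Fin m → ℝ), e.symm z = (z.1, τ⁻¹ • z.2) := fun z => rfl
    have hfe : ∀ z : B × (Fin m → ℝ), f (e z) = (d / c) * f z := by
      intro z
      rw [he_apply]
      have := hhom τ hτ z.1 z.2
      rw [← hτk]
      exact this
    have hdne : d ≠ 0 := by
      intro h; rw [h] at hdc; simp at hdc
    have hpre : e ⁻¹' (f ⁻¹' {d}) = f ⁻¹' {c} := by
      ext z
      simp only [mem_preimage, mem_singleton_iff]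
      rw [hfe z]
      constructor
      · intro h
        have h2 : (d / c) * f z = (d / c) * c := by rw [h]; field_simp
        exact mul_left_cancel₀ (ne_of_gt hdc) h2
      · intro h; rw [h]; field_simp
    have he_img : e '' (f ⁻¹' {c}) = f ⁻¹' {d} := by
      rw [← hpre, Homeomorph.image_preimage]
    have hep : e p ∈ f ⁻¹' {d} := by
      rw [← he_img]; exact mem_image_of_mem e hp
    have himg : e '' pathComponentIn (f ⁻¹' {c}) p = pathComponentIn (f ⁻¹' {d}) (e p) := by
      rw [homeo_image_pathComponentIn, he_img]
    have : pathComponentIn (f ⁻¹' {c}) p = e ⁻¹' (pathComponentIn (f ⁻¹' {d}) (e p)) := by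
      rw [← himg, preimage_image_eq _ e.injective]
    rw [this]
    exact (hdcl (e p) hep).preimage e.continuous
  refine ⟨?_, ?_, part3⟩
  · -- part 1
    intro p hp
    have hcl : IsClosed {z : B × (Fin m → ℝ) | z.2 = 0} :=
      isClosed_eq (continuous_snd) continuous_const
    intro x hx
    exact hcl.closure_subset_iff.mpr pathComponentIn_subset hx.1
  · -- part 2
    intro c p hp
    rcases eq_or_ne c 0 with rfl | hc
    · -- c = 0 : use local path connectedness of the punctured zero set
      haveI := hlpc
      set S : Set (B × (Fin m → ℝ)) := f ⁻¹' {0} \ {z : B × (Fin m → ℝ) | z.2 = 0} with hS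
      have hpS : p ∈ S := hp
      have hωeq := pathComponentIn_eq_image_subtype S p hpS
      have hccl : IsClosed (pathComponent (⟨p, hpS⟩ : S)) := by
        rw [pathComponent_eq_connectedComponent]
        exact isClosed_connectedComponent
      intro x hx
      by_contra hx2
      have hxf : x ∈ f ⁻¹' {0} := by
        have : closure (pathComponentIn S p) ⊆ f ⁻¹' {0} := by
          apply (IsClosed.closure_subset_iff (isClosed_singleton.preimage hf)).mpr
          exact pathComponentIn_subset.trans diff_subset
        exact this hx.1
      have hxS : x ∈ S := ⟨hxf, hx2⟩
      have hind : Topology.IsInducing (Subtype.val : S → B × (Fin m → ℝ)) :=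
        Topology.IsInducing.subtypeVal
      have hx_cl : (⟨x, hxS⟩ : S) ∈ closure (pathComponent (⟨p, hpS⟩ : S)) := by
        rw [hind.closure_eq_preimage_closure_image]
        show (x : B × (Fin m → ℝ)) ∈ closure (Subtype.val '' pathComponent (⟨p, hpS⟩ : S))
        rw [← hωeq]
        exact hx.1
      rw [hccl.closure_eq] at hx_cl
      exact hx.2 (hωeq ▸ ⟨⟨x, hxS⟩, hx_cl, rfl⟩)
    · -- c ≠ 0 : the set misses the zero section and path components are closed
      have hSeq : f ⁻¹' {c} \ {z : B × (Fin m → ℝ) | z.2 = 0} = f ⁻¹' {c} := by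
        ext z
        constructor
        · exact fun h => h.1
        · intro hzc
          refine ⟨hzc, fun hz2 => hc ?_⟩
          have hz : z = (z.1, (0 : Fin m → ℝ)) := by rw [← hz2]
          have hz0 : f z = 0 := by rw [hz]; exact f0 z.1
          have hzc' : f z = c := hzc
          rw [← hzc', hz0]
      rw [hSeq]
      rw [(part3 c hc p (hSeq ▸ hp)).closure_eq]
      simp
end

section
/- Let B be a topological space, m ≥ 1 an integer, k > 0 a real number, and f : B × ℝᵐ → ℝ a continuous function that is fiberwise homogeneous of degree k, i.e. f(b, τ·v) = τ^k · f(b, v) for all τ > 0, b ∈ B, v ∈ ℝᵐ. Let h : B × ℝᵐ → B × ℝᵐ be a map which maps every leaf of the (f, B)-partition into itself (i.e. for every point p, h(p) lies in the same leaf as p). Let h' : B × ℝᵐ → B × ℝᵐ be fiberwise linear over a map β : B → B, i.e. h'(b, v) = (β(b), A_b(v)) where each A_b : ℝᵐ → ℝᵐ is linear. If h = h' on some neighborhood W of B × {0} in B × ℝᵐ, then h' also maps every leaf of the (f, B)-partition into itself. -/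
open Classical

/-- The leaf through `p` of the `(f, B)`-partition of `B × ℝᵐ`: the path component of `p` in
the zero section `B × {0}` if `p` lies on the zero section, and the path component of `p` in
`f⁻¹(f(p)) ∖ (B × {0})` otherwise. -/
noncomputable def leafOf {B : Type*} [TopologicalSpace B] {m : ℕ}
    (f : B × (Fin m → ℝ) → ℝ) (p : B × (Fin m → ℝ)) : Set (B × (Fin m → ℝ)) :=
  if p.2 = 0 then pathComponentIn {z : B × (Fin m → ℝ) | z.2 = 0} p
  else pathComponentIn (f ⁻¹' {f p} \ {z : B × (Fin m → ℝ) | z.2 = 0}) p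

/-- If a map `h` preserves each leaf of the partition by path components of level sets of a
continuous fiberwise homogeneous function `f` of degree `k > 0`, and `h` coincides near the
zero section with a fiberwise linear map `h'` over some `β : B → B`, then `h'` also preserves
each leaf. -/
theorem fiberwise_linear_map_preserves_leaves
    {B : Type*} [TopologicalSpace B] {m : ℕ} (hm : 1 ≤ m) (k : ℝ) (hk : 0 < k)
    (f : B × (Fin m → ℝ) → ℝ) (hf : Continuous f)
    (hhom : ∀ τ : ℝ, 0 < τ → ∀ (b : B) (v : Fin m → ℝ), f (b, τ • v) = τ ^ k * f (b, v))
    (h h' : B × (Fin m → ℝ) → B × (Fin m → ℝ))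
    (hleaf : ∀ p : B × (Fin m → ℝ), h p ∈ leafOf f p)
    (β : B → B) (A : B → (Fin m → ℝ) →ₗ[ℝ] (Fin m → ℝ))
    (hlin : ∀ z : B × (Fin m → ℝ), h' z = (β z.1, A z.1 z.2))
    (W : Set (B × (Fin m → ℝ)))
    (hW : ∀ p : B × (Fin m → ℝ), p.2 = 0 → W ∈ nhds p)
    (hhh' : ∀ z ∈ W, h z = h' z) :
    ∀ p : B × (Fin m → ℝ), h' p ∈ leafOf f p := by
  intro p
  obtain ⟨b, v⟩ := p
  by_cases hv : v = 0
  · subst hv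
    have hpW : ((b, (0 : Fin m → ℝ))) ∈ W := mem_of_mem_nhds (hW _ rfl)
    rw [← hhh' _ hpW]
    exact hleaf _
  · -- choose a small τ > 0 with (b, τ • v) ∈ W
    have hc : Continuous (fun τ : ℝ => ((b, τ • v) : B × (Fin m → ℝ))) :=
      continuous_const.prodMk (continuous_id.smul continuous_const)
    have hWn : (fun τ : ℝ => ((b, τ • v) : B × (Fin m → ℝ))) ⁻¹' W ∈ nhds (0 : ℝ) :=
      hc.continuousAt.preimage_mem_nhds (by simpa using hW (b, (0 : Fin m → ℝ)) rfl)
    obtain ⟨ε, hε, hball⟩ := Metric.mem_nhds_iff.mp hWn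
    set τ : ℝ := ε / 2 with hτdef
    have hτ : 0 < τ := by positivity
    have hτW : ((b, τ • v) : B × (Fin m → ℝ)) ∈ W := by
      apply hball
      simp only [Metric.mem_ball, Real.dist_eq, sub_zero, abs_of_pos hτ]
      exact half_lt_self hε
    have hτv : τ • v ≠ 0 := smul_ne_zero hτ.ne' hv
    have hτk : (0 : ℝ) < τ ^ k := Real.rpow_pos_of_pos hτ k
    -- the value of h at (b, τ • v)
    have hval : h (b, τ • v) = (β b, τ • A b v) := by
      rw [hhh' _ hτW, hlin]
      simp [map_smul]
    -- h (b, τ • v) is joined to (b, τ • v) in the level set minus the zero section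
    have hJ : JoinedIn (f ⁻¹' {f (b, τ • v)} \ {z : B × (Fin m → ℝ) | z.2 = 0})
        (b, τ • v) (h (b, τ • v)) := by
      have := hleaf (b, τ • v)
      rw [leafOf, if_neg hτv] at this
      exact this
    -- the rescaling map g
    set g : B × (Fin m → ℝ) → B × (Fin m → ℝ) := fun z => (z.1, τ⁻¹ • z.2) with hg
    have hgc : Continuous g :=
      continuous_fst.prodMk (continuous_snd.const_smul τ⁻¹)
    have hτinv : (0 : ℝ) < τ⁻¹ := inv_pos.2 hτ
    have hinvk : (τ⁻¹ : ℝ) ^ k = (τ ^ k)⁻¹ := Real.inv_rpow hτ.le k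
    -- g maps the level set of f (b, τ•v) (minus zero section) into that of f (b, v)
    have hgmaps : ∀ z ∈ (f ⁻¹' {f (b, τ • v)} \ {z : B × (Fin m → ℝ) | z.2 = 0}),
        g z ∈ (f ⁻¹' {f (b, v)} \ {z : B × (Fin m → ℝ) | z.2 = 0}) := by
      rintro z ⟨hz1, hz2⟩
      simp only [Set.mem_preimage, Set.mem_singleton_iff] at hz1
      constructor
      · simp only [Set.mem_preimage, Set.mem_singleton_iff, hg]
        have : f (z.1, τ⁻¹ • z.2) = τ⁻¹ ^ k * f (z.1, z.2) := hhom τ⁻¹ hτinv z.1 z.2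
        rw [this]
        have hzz : f (z.1, z.2) = f z := by rw [Prod.mk.eta]
        rw [hzz, hz1, hhom τ hτ b v, hinvk, inv_mul_cancel_left₀ hτk.ne']
      · simp only [Set.mem_setOf_eq, hg] at hz2 ⊢
        exact smul_ne_zero (by positivity) hz2
    -- transport the path via g
    have hJ2 : JoinedIn (f ⁻¹' {f (b, v)} \ {z : B × (Fin m → ℝ) | z.2 = 0})
        (g (b, τ • v)) (g (h (b, τ • v))) := by
      obtain ⟨γ, hγ⟩ := hJ
      exact ⟨γ.map hgc, fun t => hgmaps _ (hγ t)⟩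
    have hg1 : g (b, τ • v) = (b, v) := by
      simp only [hg]
      rw [smul_smul, inv_mul_cancel₀ hτ.ne', one_smul]
    have hg2 : g (h (b, τ • v)) = h' (b, v) := by
      rw [hval, hlin]
      simp only [hg]
      rw [smul_smul, inv_mul_cancel₀ hτ.ne', one_smul]
    rw [hg1, hg2] at hJ2
    rw [leafOf, if_neg hv]
    exact hJ2
end

section
/- Let g : ℝ² → ℝ be the homogeneous polynomial g(u, v) = u·v. A linear automorphism A of ℝ² maps every path component of every set g⁻¹(c) ∖ {(0,0)} (c ∈ ℝ) into itself if and only if A = diag(t, 1/t) for some t > 0, i.e. A(u, v) = (t·u, v/t). (The path components in question are the four open half-axes for c = 0 and the hyperbola branches {uv = c, u > 0} and {uv = c, u < 0} for c ≠ 0.) -/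
open Set

private lemma leaf_mem_iff (c : ℝ) (z : ℝ × ℝ) :
    z ∈ ({z : ℝ × ℝ | z.1 * z.2 = c} \ {0}) ↔ z.1 * z.2 = c ∧ z ≠ 0 := by
  simp [Set.mem_diff]

private lemma joined_diag (t : ℝ) (ht : 0 < t) (c : ℝ) (p : ℝ × ℝ)
    (hp : p ∈ ({z : ℝ × ℝ | z.1 * z.2 = c} \ {0})) :
    JoinedIn ({z : ℝ × ℝ | z.1 * z.2 = c} \ {0}) p (t * p.1, p.2 / t) := by
  rw [leaf_mem_iff] at hp
  obtain ⟨hpc, hp0⟩ := hp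
  have hexp : ∀ s : ℝ, Real.exp (s * Real.log t) ≠ 0 := fun s => (Real.exp_pos _).ne'
  refine JoinedIn.ofLine (f := fun s : ℝ => (Real.exp (s * Real.log t) * p.1,
      p.2 / Real.exp (s * Real.log t))) ?_ (by simp) (by simp [Real.exp_log ht]) ?_
  · exact (Continuous.prodMk ((Real.continuous_exp.comp (continuous_id.mul continuous_const)).mul
      continuous_const) (continuous_const.div
        (Real.continuous_exp.comp (continuous_id.mul continuous_const)) hexp)).continuousOn
  · rintro _ ⟨s, _, rfl⟩
    rw [leaf_mem_iff]
    constructor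
    · show (Real.exp (s * Real.log t) * p.1) * (p.2 / Real.exp (s * Real.log t)) = c
      rw [← hpc]
      field_simp
    · intro h
      apply hp0
      have h1 : Real.exp (s * Real.log t) * p.1 = 0 := congrArg Prod.fst h
      have h2 : p.2 / Real.exp (s * Real.log t) = 0 := congrArg Prod.snd h
      have hp1 : p.1 = 0 := by
        rcases mul_eq_zero.mp h1 with h' | h'
        · exact absurd h' (hexp s)
        · exact h'
      have hp2 : p.2 = 0 := by
        rcases div_eq_zero_iff.mp h2 with h' | h'
        · exact h'
        · exact absurd h' (hexp s)
      exact Prod.ext hp1 hp2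

/-- For `g(u, v) = u·v` on `ℝ²`, a linear automorphism `A` maps every path component of every
set `g⁻¹(c) ∖ {0}` into itself if and only if `A = diag(t, 1/t)` for some `t > 0`. -/
theorem leaf_preserving_linear_automorphisms_of_uv
    (A : (ℝ × ℝ) ≃ₗ[ℝ] (ℝ × ℝ)) :
    (∀ c : ℝ, ∀ p ∈ ({z : ℝ × ℝ | z.1 * z.2 = c} \ {0}),
        (fun z => A z) '' pathComponentIn ({z : ℝ × ℝ | z.1 * z.2 = c} \ {0}) p
          ⊆ pathComponentIn ({z : ℝ × ℝ | z.1 * z.2 = c} \ {0}) p)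
      ↔ ∃ t : ℝ, 0 < t ∧ ∀ u v : ℝ, A (u, v) = (t * u, v / t) := by
  have hAcont : Continuous fun z : ℝ × ℝ => A z :=
    A.toLinearMap.continuous_of_finiteDimensional
  constructor
  · intro h
    -- A p ∈ pathComponentIn p S for each leaf point p
    have key : ∀ c : ℝ, ∀ p ∈ ({z : ℝ × ℝ | z.1 * z.2 = c} \ {0}),
        A p ∈ pathComponentIn ({z : ℝ × ℝ | z.1 * z.2 = c} \ {0}) p := by
      intro c p hp
      exact h c p hp (mem_image_of_mem _ (mem_pathComponentIn_self hp))
    -- the point (1,0)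
    have h10 : ((1 : ℝ), (0 : ℝ)) ∈ ({z : ℝ × ℝ | z.1 * z.2 = 0} \ {0}) := by
      rw [leaf_mem_iff]
      constructor
      · ring
      · simp [Prod.ext_iff]
    have h01 : ((0 : ℝ), (1 : ℝ)) ∈ ({z : ℝ × ℝ | z.1 * z.2 = 0} \ {0}) := by
      rw [leaf_mem_iff]
      constructor
      · ring
      · simp [Prod.ext_iff]
    have h11 : ((1 : ℝ), (1 : ℝ)) ∈ ({z : ℝ × ℝ | z.1 * z.2 = 1} \ {0}) := by
      rw [leaf_mem_iff]
      constructor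
      · ring
      · simp [Prod.ext_iff]
    -- A(1,0) lies in {|z.2| < z.1}
    have sector1 : |(A (1, 0)).2| < (A (1, 0)).1 := by
      have hpc := isPathConnected_pathComponentIn h10
      have hconn : IsPreconnected (pathComponentIn ({z : ℝ × ℝ | z.1 * z.2 = 0} \ {0})
          ((1:ℝ),(0:ℝ))) := hpc.isConnected.isPreconnected
      have hU : IsOpen {z : ℝ × ℝ | |z.2| < z.1} :=
        isOpen_lt (continuous_snd.abs) continuous_fst
      have hV : IsOpen {z : ℝ × ℝ | z.1 < |z.2|} :=
        isOpen_lt continuous_fst (continuous_snd.abs)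
      have hdisj : Disjoint {z : ℝ × ℝ | |z.2| < z.1} {z : ℝ × ℝ | z.1 < |z.2|} := by
        rw [Set.disjoint_left]
        intro z hz hz'
        simp only [mem_setOf_eq] at hz hz'
        linarith
      have hcover : pathComponentIn ({z : ℝ × ℝ | z.1 * z.2 = 0} \ {0}) ((1:ℝ),(0:ℝ))
          ⊆ {z : ℝ × ℝ | |z.2| < z.1} ∪ {z : ℝ × ℝ | z.1 < |z.2|} := by
        intro z hz
        have hzS := pathComponentIn_subset hz
        rw [leaf_mem_iff] at hzS
        obtain ⟨hz1, hz2⟩ := hzS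
        rcases mul_eq_zero.mp hz1 with h1 | h2
        · have : z.2 ≠ 0 := by
            intro h2
            exact hz2 (Prod.ext h1 h2)
          right
          simp only [mem_setOf_eq]
          rw [h1]
          exact abs_pos.mpr this
        · have h1 : z.1 ≠ 0 := by
            intro h1
            exact hz2 (Prod.ext h1 h2)
          rcases h1.lt_or_gt with h | h
          · right; simp only [mem_setOf_eq, h2, abs_zero]; exact h
          · left; simp only [mem_setOf_eq, h2, abs_zero]; exact h
      have hne : (pathComponentIn ({z : ℝ × ℝ | z.1 * z.2 = 0} \ {0}) ((1:ℝ),(0:ℝ))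
          ∩ {z : ℝ × ℝ | |z.2| < z.1}).Nonempty := by
        refine ⟨(1, 0), mem_pathComponentIn_self h10, ?_⟩
        simp
      have := hconn.subset_left_of_subset_union hU hV hdisj hcover hne
      exact this (key 0 _ h10)
    -- A(0,1) lies in {|z.1| < z.2}
    have sector2 : |(A (0, 1)).1| < (A (0, 1)).2 := by
      have hpc := isPathConnected_pathComponentIn h01
      have hconn : IsPreconnected (pathComponentIn ({z : ℝ × ℝ | z.1 * z.2 = 0} \ {0})
          ((0:ℝ),(1:ℝ))) := hpc.isConnected.isPreconnected
      have hU : IsOpen {z : ℝ × ℝ | |z.1| < z.2} :=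
        isOpen_lt (continuous_fst.abs) continuous_snd
      have hV : IsOpen {z : ℝ × ℝ | z.2 < |z.1|} :=
        isOpen_lt continuous_snd (continuous_fst.abs)
      have hdisj : Disjoint {z : ℝ × ℝ | |z.1| < z.2} {z : ℝ × ℝ | z.2 < |z.1|} := by
        rw [Set.disjoint_left]
        intro z hz hz'
        simp only [mem_setOf_eq] at hz hz'
        linarith
      have hcover : pathComponentIn ({z : ℝ × ℝ | z.1 * z.2 = 0} \ {0}) ((0:ℝ),(1:ℝ))
          ⊆ {z : ℝ × ℝ | |z.1| < z.2} ∪ {z : ℝ × ℝ | z.2 < |z.1|} := by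
        intro z hz
        have hzS := pathComponentIn_subset hz
        rw [leaf_mem_iff] at hzS
        obtain ⟨hz1, hz2⟩ := hzS
        rcases mul_eq_zero.mp hz1 with h1 | h2
        · have h2 : z.2 ≠ 0 := by
            intro h2
            exact hz2 (Prod.ext h1 h2)
          rcases h2.lt_or_gt with h | h
          · right; simp only [mem_setOf_eq, h1, abs_zero]; exact h
          · left; simp only [mem_setOf_eq, h1, abs_zero]; exact h
        · have h1 : z.1 ≠ 0 := by
            intro h1
            exact hz2 (Prod.ext h1 h2)
          right
          simp only [mem_setOf_eq]
          rw [h2]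
          exact abs_pos.mpr h1
      have hne : (pathComponentIn ({z : ℝ × ℝ | z.1 * z.2 = 0} \ {0}) ((0:ℝ),(1:ℝ))
          ∩ {z : ℝ × ℝ | |z.1| < z.2}).Nonempty := by
        refine ⟨(0, 1), mem_pathComponentIn_self h01, ?_⟩
        simp
      have := hconn.subset_left_of_subset_union hU hV hdisj hcover hne
      exact this (key 0 _ h01)
    set a := (A (1, 0)).1 with ha_def
    set b := (A (1, 0)).2 with hb_def
    set c := (A (0, 1)).1 with hc_def
    set d := (A (0, 1)).2 with hd_def
    -- b = 0, c = 0
    have hA10S := pathComponentIn_subset (key 0 _ h10)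
    rw [leaf_mem_iff] at hA10S
    have ha : 0 < a := lt_of_le_of_lt (abs_nonneg _) sector1
    have hb : b = 0 := by
      rcases mul_eq_zero.mp hA10S.1 with h' | h'
      · exact absurd h' (by rw [← ha_def]; exact ha.ne')
      · exact h'
    have hA01S := pathComponentIn_subset (key 0 _ h01)
    rw [leaf_mem_iff] at hA01S
    have hd : 0 < d := lt_of_le_of_lt (abs_nonneg _) sector2
    have hc : c = 0 := by
      rcases mul_eq_zero.mp hA01S.1 with h' | h'
      · exact h'
      · exact absurd h' (by rw [← hd_def]; exact hd.ne')
    -- A(1,1) = (a, d) with a*d = 1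
    have hA11 : A ((1:ℝ), (1:ℝ)) = (a, d) := by
      have : ((1:ℝ), (1:ℝ)) = ((1:ℝ), (0:ℝ)) + ((0:ℝ), (1:ℝ)) := by
        simp [Prod.ext_iff]
      rw [this, map_add]
      rw [Prod.ext_iff]
      constructor
      · simp [Prod.fst_add, ← ha_def, ← hc_def, hc]
      · simp [Prod.snd_add, ← hb_def, ← hd_def, hb]
    have hA11S := pathComponentIn_subset (key 1 _ h11)
    rw [leaf_mem_iff] at hA11S
    have had : a * d = 1 := by
      have := hA11S.1
      rw [hA11] at this
      exact this
    refine ⟨a, ha, fun u v => ?_⟩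
    have huv : ((u : ℝ), (v : ℝ)) = u • ((1:ℝ), (0:ℝ)) + v • ((0:ℝ), (1:ℝ)) := by
      simp [Prod.ext_iff]
    rw [huv, map_add, map_smul, map_smul, Prod.ext_iff]
    have hdval : d = a⁻¹ := by
      field_simp
      linarith [had]
    constructor
    · simp [Prod.fst_add, Prod.smul_fst, ← ha_def, ← hc_def, hc, mul_comm]
    · simp [Prod.snd_add, Prod.smul_snd, ← hb_def, ← hd_def, hb, hdval, div_eq_mul_inv]
  · rintro ⟨t, ht, hA⟩ c p hp y hy
    obtain ⟨q, hq, rfl⟩ := hy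
    have hq' : JoinedIn ({z : ℝ × ℝ | z.1 * z.2 = c} \ {0}) p q := hq
    -- A maps the leaf into itself
    have hAS : (fun z : ℝ × ℝ => A z) '' ({z : ℝ × ℝ | z.1 * z.2 = c} \ {0})
        ⊆ ({z : ℝ × ℝ | z.1 * z.2 = c} \ {0}) := by
      rintro _ ⟨z, hz, rfl⟩
      show A z ∈ ({z : ℝ × ℝ | z.1 * z.2 = c} \ {0})
      rw [leaf_mem_iff] at hz ⊢
      obtain ⟨hz1, hz2⟩ := hz
      have hAz : A z = (t * z.1, z.2 / t) := by
        have := hA z.1 z.2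
        simpa using this
      constructor
      · rw [hAz]
        show (t * z.1) * (z.2 / t) = c
        rw [← hz1]
        field_simp
      · intro h0
        exact hz2 (by simpa using A.map_eq_zero_iff.mp h0)
    have step1 : JoinedIn ({z : ℝ × ℝ | z.1 * z.2 = c} \ {0}) (A p) (A q) :=
      (hq'.map hAcont).mono hAS
    have hAp : A p = (t * p.1, p.2 / t) := by
      have := hA p.1 p.2
      simpa using this
    have step2 : JoinedIn ({z : ℝ × ℝ | z.1 * z.2 = c} \ {0}) p (A p) := by
      rw [hAp]
      exact joined_diag t ht c p hp
    exact step2.trans step1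
end

section
/- Let G and H be topological groups, φ : G → H a continuous group homomorphism with kernel K, admitting a continuous local section s : U → G on an open neighborhood U of the identity of H. Then φ : G → φ(G) is a locally trivial principal K-fibration: for every g ∈ G there exist an open set V ⊆ H containing φ(g) and a homeomorphism Ψ : V × K → φ⁻¹(V) such that φ(Ψ(y, k)) = y for all y ∈ V and k ∈ K (one may take V = φ(g)·U and Ψ(y, k) = g · s(φ(g)⁻¹ · y) · k). -/
/-- A continuous homomorphism `φ : G → H` of topological groups admitting a continuous local
section on an open neighborhood of the identity of `H` is a locally trivial principal
`ker φ`-fibration over its image: every `g ∈ G` has an open set `V ⊆ H` with `φ(g) ∈ V` and a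
homeomorphism `Ψ : V × ker φ ≃ₜ φ⁻¹(V)` such that `φ(Ψ(y, k)) = y`. -/
theorem hom_with_local_section_is_locally_trivial_fibration
    {G H : Type*} [Group G] [TopologicalSpace G] [IsTopologicalGroup G]
    [Group H] [TopologicalSpace H] [IsTopologicalGroup H]
    (φ : G →* H) (hφ : Continuous φ)
    (U : Set H) (hU : IsOpen U) (h1U : (1 : H) ∈ U)
    (s : U → G) (hs : Continuous s) (hsec : ∀ u : U, φ (s u) = (u : H)) :
    ∀ g : G, ∃ V : Set H, IsOpen V ∧ φ g ∈ V ∧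
      ∃ Ψ : (↥V × ↥(MonoidHom.ker φ)) ≃ₜ ↥(φ ⁻¹' V),
        ∀ (y : ↥V) (k : ↥(MonoidHom.ker φ)), φ ((Ψ (y, k) : G)) = (y : H) := by
  intro g
  set a : H := φ g with ha
  set V : Set H := (a * ·) '' U with hV
  have hVopen : IsOpen V := isOpenMap_mul_left a U hU
  have haV : a ∈ V := ⟨1, h1U, mul_one a⟩
  have hmem : ∀ y : V, a⁻¹ * (y : H) ∈ U := by
    rintro ⟨y, u, hu, rfl⟩; simpa using hu
  set σ : V → G := fun y => g * s ⟨a⁻¹ * y, hmem y⟩ with hσ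
  have hσc : Continuous σ := by
    apply continuous_const.mul
    exact hs.comp (((continuous_const.mul continuous_subtype_val).subtype_mk _))
  have hφσ : ∀ y : V, φ (σ y) = (y : H) := by
    intro y
    simp only [hσ, map_mul, hsec ⟨a⁻¹ * y, hmem y⟩, ← ha]
    exact mul_inv_cancel_left a y
  have hFmem : ∀ (p : V × (MonoidHom.ker φ)), σ p.1 * (p.2 : G) ∈ φ ⁻¹' V := by
    intro p
    have hk : φ (p.2 : G) = 1 := p.2.2
    simp [Set.mem_preimage, map_mul, hφσ, hk, p.1.2]
  have hBmem1 : ∀ x : ↥(φ ⁻¹' V), φ (x : G) ∈ V := fun x => x.2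
  have hBmem2 : ∀ x : ↥(φ ⁻¹' V),
      (σ ⟨φ (x : G), x.2⟩)⁻¹ * (x : G) ∈ MonoidHom.ker φ := by
    intro x
    simp [MonoidHom.mem_ker, map_mul, hφσ]
  refine ⟨V, hVopen, haV, ?_⟩
  refine ⟨{
    toFun := fun p => ⟨σ p.1 * (p.2 : G), hFmem p⟩
    invFun := fun x => (⟨φ (x : G), hBmem1 x⟩, ⟨(σ ⟨φ (x : G), x.2⟩)⁻¹ * (x : G), hBmem2 x⟩)
    left_inv := ?_
    right_inv := ?_
    continuous_toFun := ?_
    continuous_invFun := ?_ }, ?_⟩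
  · rintro ⟨y, k⟩
    have hk : φ (k : G) = 1 := k.2
    have h1 : φ (σ y * (k : G)) = (y : H) := by simp [map_mul, hφσ, hk]
    have h2 : (⟨φ (σ y * (k : G)), hFmem (y, k)⟩ : V) = y := Subtype.ext h1
    refine Prod.ext (by exact h2) (Subtype.ext ?_)
    show (σ ⟨φ (σ y * (k : G)), hFmem (y, k)⟩)⁻¹ * (σ y * (k : G)) = (k : G)
    rw [h2, inv_mul_cancel_left]
  · rintro ⟨x, hx⟩
    exact Subtype.ext (mul_inv_cancel_left _ _)
  · exact ((hσc.comp continuous_fst).mul (continuous_subtype_val.comp continuous_snd)).subtype_mk _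
  · refine Continuous.prodMk ?_ ?_
    · exact (hφ.comp continuous_subtype_val).subtype_mk _
    · refine Continuous.subtype_mk ?_ _
      exact ((hσc.comp (((hφ.comp continuous_subtype_val)).subtype_mk _)).inv).mul
        continuous_subtype_val
  · intro y k
    have hk : φ (k : G) = 1 := k.2
    show φ (σ y * (k : G)) = (y : H)
    simp [map_mul, hφσ, hk]
end

section
/- Let B be a compact, connected, locally path-connected Hausdorff space and x₀ ∈ B. Consider the space C(B, S¹) of continuous maps from B to the circle group S¹ = {z ∈ ℂ : |z| = 1}, with the compact-open topology (a topological group under pointwise multiplication). Let C₀ denote the path component of the constant map 1 in C(B, S¹). Then C₀ is homeomorphic to K̂ × S¹, where K̂ = {g ∈ C(B, ℝ) : g(x₀) = 0} carries the compact-open topology. (Explicitly, (g, z) ↦ the map x ↦ z·exp(2πi·g(x)) is a homeomorphism K̂ × S¹ → C₀.) -/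
set_option linter.unusedSectionVars false

open Complex Real Set

namespace PCCM

variable {B : Type*} [TopologicalSpace B] [CompactSpace B] [T2Space B]

/-- The basic map `(g, z) ↦ (x ↦ z * exp(i g x))`. -/
noncomputable def phi (g : C(B, ℝ)) (z : Circle) : C(B, Circle) :=
  ContinuousMap.const B z * Circle.exp.comp g

lemma phi_apply (g : C(B, ℝ)) (z : Circle) (x : B) : phi g z x = z * Circle.exp (g x) := rfl

lemma continuous_phi : Continuous (fun p : C(B, ℝ) × Circle => phi p.1 p.2) := by
  apply Continuous.mul
  · exact ContinuousMap.const'.continuous.comp continuous_snd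
  · exact (ContinuousMap.continuous_postcomp _).comp continuous_fst

lemma phi_mul (g₁ g₂ : C(B, ℝ)) (z₁ z₂ : Circle) :
    phi (g₁ + g₂) (z₁ * z₂) = phi g₁ z₁ * phi g₂ z₂ := by
  ext x
  simp [phi_apply, Circle.exp_add, mul_mul_mul_comm]

lemma phi_mem (g : C(B, ℝ)) (z : Circle) : phi g z ∈ pathComponent (1 : C(B, Circle)) := by
  obtain ⟨a, ha⟩ : ∃ a, Circle.exp a = z := ⟨Complex.arg z, Circle.exp_arg z⟩
  show Joined 1 (phi g z)
  refine ⟨⟨⟨fun t => phi ((t : ℝ) • g) (Circle.exp ((t : ℝ) * a)), ?_⟩, ?_, ?_⟩⟩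
  · exact continuous_phi.comp
      (((continuous_subtype_val.smul continuous_const)).prodMk
        (Circle.exp.continuous.comp (continuous_subtype_val.mul continuous_const)))
  · ext x; simp [phi_apply]
  · ext x; simp [phi_apply, ha]

lemma circle_mem_slitPlane {w : Circle} (hw : (w : ℂ) ≠ -1) : (w : ℂ) ∈ Complex.slitPlane := by
  rw [Complex.mem_slitPlane_iff]
  by_contra h
  push_neg at h
  obtain ⟨h1, h2⟩ := h
  have hns := w.normSq_coe
  rw [Complex.normSq_apply, h2] at hns
  simp only [mul_zero, add_zero] at hns
  rcases mul_self_eq_one_iff.mp hns with hre | hre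
  · rw [hre] at h1; linarith
  · exact hw (Complex.ext (by simp [hre]) (by simp [h2]))

lemma exists_lift {f : C(B, Circle)} (hf : ∀ x, ((f x : ℂ)) ≠ -1) :
    ∃ g : C(B, ℝ), phi g 1 = f := by
  refine ⟨⟨fun x => Complex.arg (f x), ?_⟩, ?_⟩
  · rw [continuous_iff_continuousAt]
    intro x
    have h1 : ContinuousAt (fun x : B => ((f x : ℂ))) x :=
      (continuous_subtype_val.comp f.continuous).continuousAt
    exact ContinuousAt.comp (x := x) (g := Complex.arg)
      (Complex.continuousAt_arg (circle_mem_slitPlane (hf x))) h1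
  · ext x
    simp [phi_apply, Circle.exp_arg]

/-- The subgroup of maps of the form `phi g z`. -/
noncomputable def S : Subgroup C(B, Circle) where
  carrier := {f | ∃ g z, phi g z = f}
  mul_mem' := by
    rintro a b ⟨g₁, z₁, rfl⟩ ⟨g₂, z₂, rfl⟩
    exact ⟨g₁ + g₂, z₁ * z₂, phi_mul g₁ g₂ z₁ z₂⟩
  one_mem' := ⟨0, 1, by ext x; simp [phi_apply]⟩
  inv_mem' := by
    rintro a ⟨g, z, rfl⟩
    exact ⟨-g, z⁻¹, by ext x; simp [phi_apply, mul_inv, mul_comm]⟩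

lemma isOpen_S : IsOpen ((S : Subgroup C(B, Circle)) : Set C(B, Circle)) := by
  apply Subgroup.isOpen_of_mem_nhds
  have hUo : IsOpen {f : C(B, Circle) | Set.MapsTo f Set.univ {w : Circle | (w : ℂ) ≠ -1}} :=
    ContinuousMap.isOpen_setOf_mapsTo isCompact_univ
      (isOpen_compl_singleton.preimage continuous_subtype_val)
  refine Filter.mem_of_superset (hUo.mem_nhds (x := (1 : C(B, Circle))) ?_) ?_
  · intro x _
    simp only [ContinuousMap.one_apply, Set.mem_setOf_eq, Circle.coe_one]
    norm_num
  · intro f hf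
    obtain ⟨g, hg⟩ := exists_lift (fun x => hf (Set.mem_univ x))
    exact ⟨g, 1, hg⟩

lemma pathComponent_one_subset :
    pathComponent (1 : C(B, Circle)) ⊆ (S : Subgroup C(B, Circle)) := by
  have h1 : IsClopen ((S : Subgroup C(B, Circle)) : Set C(B, Circle)) :=
    ⟨Subgroup.isClosed_of_isOpen _ isOpen_S, isOpen_S⟩
  exact (pathComponent_subset_component _).trans
    (h1.connectedComponent_subset (one_mem (S (B := B))))

lemma phi_injective [ConnectedSpace B] (x₀ : B) {g₁ g₂ : C(B, ℝ)} {z₁ z₂ : Circle}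
    (h₁ : g₁ x₀ = 0) (h₂ : g₂ x₀ = 0) (h : phi g₁ z₁ = phi g₂ z₂) : g₁ = g₂ ∧ z₁ = z₂ := by
  have hx : ∀ x, z₁ * Circle.exp (g₁ x) = z₂ * Circle.exp (g₂ x) := by
    intro x
    have := DFunLike.congr_fun h x
    rwa [phi_apply, phi_apply] at this
  have hz : z₁ = z₂ := by
    have := hx x₀
    rw [h₁, h₂] at this
    simpa using this
  subst hz
  have he : ∀ x, Circle.exp (g₁ x) = Circle.exp (g₂ x) := fun x => mul_left_cancel (hx x)
  have hm : ∀ x, ∃ m : ℤ, g₁ x - g₂ x = m * (2 * π) := by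
    intro x
    obtain ⟨m, hm⟩ := Circle.exp_eq_exp.mp (he x)
    exact ⟨m, by linarith⟩
  set d : B → ℝ := fun y => g₁ y - g₂ y with hd_def
  have hd : Continuous d := (map_continuous g₁).sub (map_continuous g₂)
  have hd0 : d x₀ = 0 := by simp [hd_def, h₁, h₂]
  have hint : ∀ k : ℤ, (k : ℝ) * (2 * π) = π → False := by
    intro k hk
    have hπ := Real.pi_ne_zero
    have h2k : ((2 * k - 1 : ℤ) : ℝ) * π = 0 := by push_cast; linarith
    have : ((2 * k - 1 : ℤ) : ℝ) = 0 := by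
      rcases mul_eq_zero.mp h2k with h | h
      · exact h
      · exact absurd h hπ
    have : (2 * k - 1 : ℤ) = 0 := by exact_mod_cast this
    omega
  have hintneg : ∀ k : ℤ, (k : ℝ) * (2 * π) = -π → False := by
    intro k hk
    exact hint (-k) (by push_cast; linarith)
  have key : ∀ x, g₁ x = g₂ x := by
    intro x
    by_contra hne
    obtain ⟨m, hmx⟩ := hm x
    have hdx : d x = m * (2 * π) := hmx
    have hm0 : m ≠ 0 := by
      rintro rfl
      simp only [Int.cast_zero, zero_mul] at hmx
      exact hne (sub_eq_zero.mp hmx)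
    rcases lt_or_gt_of_ne hm0 with hmneg | hmpos
    · have hmem : (-π) ∈ Set.Icc (d x) (d x₀) := by
        have hmle : m ≤ -1 := by omega
        have hm1 : (m : ℝ) ≤ -1 := by exact_mod_cast hmle
        constructor
        · rw [hdx]; nlinarith [Real.pi_pos]
        · rw [hd0]; nlinarith [Real.pi_pos]
      obtain ⟨y, hy⟩ := intermediate_value_univ x x₀ hd hmem
      obtain ⟨k, hk⟩ := hm y
      exact hintneg k (by rw [← hk]; exact hy)
    · have hmem : π ∈ Set.Icc (d x₀) (d x) := by
        have hmle : 1 ≤ m := by omega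
        have hm1 : (1 : ℝ) ≤ (m : ℝ) := by exact_mod_cast hmle
        constructor
        · rw [hd0]; nlinarith [Real.pi_pos]
        · rw [hdx]; nlinarith [Real.pi_pos]
      obtain ⟨y, hy⟩ := intermediate_value_univ x₀ x hd hmem
      obtain ⟨k, hk⟩ := hm y
      exact hint k (by rw [← hk]; exact hy)
  exact ⟨ContinuousMap.ext fun x => key x, rfl⟩

lemma phi_normalize (g : C(B, ℝ)) (z : Circle) (x₀ : B) :
    ∃ g' z', g' x₀ = 0 ∧ phi g' z' = phi g z := by
  refine ⟨g - ContinuousMap.const B (g x₀), z * Circle.exp (g x₀), by simp, ?_⟩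
  refine ContinuousMap.ext fun x => ?_
  rw [phi_apply, phi_apply, ContinuousMap.sub_apply, ContinuousMap.const_apply,
    mul_assoc, ← Circle.exp_add]
  congr 2
  ring

end PCCM

/-- For a compact, connected, locally path-connected Hausdorff space `B` with base point `x₀`,
the path component `C₀` of the constant map `1` in `C(B, S¹)` (compact-open topology) is
homeomorphic to `K̂ × S¹`, where `K̂ = {g ∈ C(B, ℝ) : g(x₀) = 0}`, via
`(g, z) ↦ (x ↦ z · exp(2πi·g(x)))`. -/
theorem path_component_of_circle_maps
    {B : Type*} [TopologicalSpace B] [CompactSpace B] [ConnectedSpace B]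
    [LocallyPathConnectedSpace B] [T2Space B] (x₀ : B) :
    ∃ e : ({g : C(B, ℝ) // g x₀ = 0} × Circle) ≃ₜ
        ↥(pathComponent (1 : C(B, Circle))),
      ∀ (g : {g : C(B, ℝ) // g x₀ = 0}) (z : Circle) (x : B),
        ((e (g, z) : C(B, Circle)) : C(B, Circle)) x =
          z * Circle.exp (2 * Real.pi * (g : C(B, ℝ)) x) := by
  classical
  have two_pi_ne : (2 * π) ≠ 0 := by positivity
  let F : ({g : C(B, ℝ) // g x₀ = 0} × Circle) → ↥(pathComponent (1 : C(B, Circle))) :=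
    fun p => ⟨PCCM.phi ((2 * π) • p.1.1) p.2, PCCM.phi_mem _ _⟩
  have hinj : Function.Injective F := by
    rintro ⟨⟨g₁, hg₁⟩, z₁⟩ ⟨⟨g₂, hg₂⟩, z₂⟩ h
    have h' : PCCM.phi ((2 * π) • g₁) z₁ = PCCM.phi ((2 * π) • g₂) z₂ :=
      congrArg Subtype.val h
    obtain ⟨hg, hz⟩ := PCCM.phi_injective x₀ (by simp [hg₁]) (by simp [hg₂]) h'
    have hgeq : g₁ = g₂ := by
      refine ContinuousMap.ext fun x => ?_
      have := DFunLike.congr_fun hg x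
      simp only [ContinuousMap.smul_apply, smul_eq_mul] at this
      exact mul_left_cancel₀ two_pi_ne this
    simp [hgeq, hz]
  have hsurj : Function.Surjective F := by
    rintro ⟨f, hf⟩
    obtain ⟨g, z, hgz⟩ := PCCM.pathComponent_one_subset hf
    obtain ⟨g', z', hg'0, heq⟩ := PCCM.phi_normalize g z x₀
    refine ⟨⟨⟨(2 * π)⁻¹ • g', by simp [hg'0]⟩, z'⟩, ?_⟩
    apply Subtype.ext
    show PCCM.phi ((2 * π) • ((2 * π)⁻¹ • g')) z' = f
    rw [smul_smul, mul_inv_cancel₀ two_pi_ne, one_smul]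
    exact heq.trans hgz
  let E : ({g : C(B, ℝ) // g x₀ = 0} × Circle) ≃ ↥(pathComponent (1 : C(B, Circle))) :=
    Equiv.ofBijective F ⟨hinj, hsurj⟩
  have hFc : Continuous F := by
    apply Continuous.subtype_mk
    exact PCCM.continuous_phi.comp
      (((continuous_subtype_val.comp continuous_fst).const_smul (2 * π)).prodMk
        continuous_snd)
  have hIc : Continuous E.symm := by
    rw [continuous_iff_continuousAt]
    intro f₀
    set p₀ := E.symm f₀ with hp₀
    have hf₀ : F p₀ = f₀ := E.apply_symm_apply f₀
    let U : Set C(B, Circle) := {f | Set.MapsTo f Set.univ {w : Circle | (w : ℂ) ≠ -1}}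
    have hUo : IsOpen U := ContinuousMap.isOpen_setOf_mapsTo isCompact_univ
      (isOpen_compl_singleton.preimage continuous_subtype_val)
    let W : Set C(B, Circle) := (fun f => f * (f₀.1)⁻¹) ⁻¹' U
    have hWo : IsOpen W := hUo.preimage (continuous_mul_right _)
    have hf₀W : (f₀ : C(B, Circle)) ∈ W := by
      show (f₀.1 * (f₀.1)⁻¹) ∈ U
      rw [mul_inv_cancel]
      intro x _
      show ((1 : C(B, Circle)) x : ℂ) ≠ -1
      norm_num
    let V : Set ↥(pathComponent (1 : C(B, Circle))) := Subtype.val ⁻¹' W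
    have hVo : IsOpen V := hWo.preimage continuous_subtype_val
    have hf₀V : f₀ ∈ V := hf₀W
    have hmemx : ∀ (v : ↥V) (x : B), ((v.1.1 x * (f₀.1 x)⁻¹ : Circle) : ℂ) ≠ -1 := by
      intro v x
      have hv := v.2
      have := hv (Set.mem_univ x)
      simpa using this
    let A : ↥V → C(B, ℝ) := fun v =>
      ⟨fun x => Complex.arg ((v.1.1 x * (f₀.1 x)⁻¹ : Circle) : ℂ), by
        rw [continuous_iff_continuousAt]
        intro x
        have h1 : ContinuousAt (fun x : B => ((v.1.1 x * (f₀.1 x)⁻¹ : Circle) : ℂ)) x :=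
          (continuous_subtype_val.comp
            ((map_continuous v.1.1).mul ((map_continuous f₀.1).inv))).continuousAt
        exact ContinuousAt.comp (x := x) (g := Complex.arg)
          (Complex.continuousAt_arg (PCCM.circle_mem_slitPlane (hmemx v x))) h1⟩
    have hA : Continuous A := by
      apply ContinuousMap.continuous_of_continuous_uncurry
      rw [continuous_iff_continuousAt]
      rintro ⟨v, x⟩
      have hq0 : Continuous (fun p : ↥V × B => (p.1.1.1 p.2 * (f₀.1 p.2)⁻¹ : Circle)) := by
        apply Continuous.mul
        · exact continuous_eval.comp
            (((continuous_subtype_val.comp continuous_subtype_val).comp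
              continuous_fst).prodMk continuous_snd)
        · exact Continuous.inv ((map_continuous f₀.1).comp continuous_snd)
      have hq : Continuous (fun p : ↥V × B => ((p.1.1.1 p.2 * (f₀.1 p.2)⁻¹ : Circle) : ℂ)) :=
        continuous_subtype_val.comp hq0
      exact ContinuousAt.comp (x := (v, x)) (g := Complex.arg)
        (Complex.continuousAt_arg (PCCM.circle_mem_slitPlane (hmemx v x))) hq.continuousAt
    let Ψ : ↥V → ({g : C(B, ℝ) // g x₀ = 0} × Circle) := fun v =>
      (⟨p₀.1.1 + (2 * π)⁻¹ • (A v - ContinuousMap.const B (A v x₀)), by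
          simp [p₀.1.2]⟩,
        p₀.2 * Circle.exp (A v x₀))
    have hAx₀ : Continuous fun v => A v x₀ := (continuous_eval_const x₀).comp hA
    have hΨc : Continuous Ψ := by
      refine Continuous.prodMk ?_ (continuous_const.mul (Circle.exp.continuous.comp hAx₀))
      refine Continuous.subtype_mk ?_ _
      exact continuous_const.add ((hA.sub
        ((map_continuous (ContinuousMap.const' : C(ℝ, C(B, ℝ)))).comp hAx₀)).const_smul (2 * π)⁻¹)
    have hf₀x : ∀ x, (f₀ : C(B, Circle)) x = p₀.2 * Circle.exp ((2 * π) * p₀.1.1 x) := by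
      intro x
      rw [← hf₀]
      show PCCM.phi ((2 * π) • p₀.1.1) p₀.2 x = _
      rw [PCCM.phi_apply, ContinuousMap.smul_apply, smul_eq_mul]
    have hEΨ : ∀ v : ↥V, F (Ψ v) = v.1 := by
      intro v
      apply Subtype.ext
      refine ContinuousMap.ext fun x => ?_
      show PCCM.phi ((2 * π) • (p₀.1.1 + (2 * π)⁻¹ • (A v - ContinuousMap.const B (A v x₀))))
        (p₀.2 * Circle.exp (A v x₀)) x = v.1.1 x
      rw [PCCM.phi_apply]
      have harg : ((2 * π) • (p₀.1.1 + (2 * π)⁻¹ • (A v - ContinuousMap.const B (A v x₀)))) x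
          = (2 * π) * p₀.1.1 x + (A v x - A v x₀) := by
        simp only [ContinuousMap.smul_apply, ContinuousMap.add_apply, ContinuousMap.sub_apply,
          ContinuousMap.const_apply, smul_eq_mul]
        field_simp
      rw [harg]
      have hAval : Circle.exp (A v x) = v.1.1 x * ((f₀ : C(B, Circle)) x)⁻¹ :=
        Circle.exp_arg _
      rw [show (2 * π) * p₀.1.1 x + (A v x - A v x₀)
          = A v x + ((2 * π) * p₀.1.1 x - A v x₀) by ring,
        Circle.exp_add, Circle.exp_sub, hAval, hf₀x x]
      rw [← Circle.coe_inj]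
      simp only [Circle.coe_mul, Circle.coe_div, Circle.coe_inv]
      field_simp
    have hsymm_eq : ∀ v : ↥V, E.symm v.1 = Ψ v := by
      intro v
      apply E.injective
      rw [E.apply_symm_apply]
      exact (hEΨ v).symm
    have hcont_on : ContinuousOn E.symm V := by
      rw [continuousOn_iff_continuous_restrict]
      have hre : Set.domRestrict V E.symm = Ψ := funext fun v => hsymm_eq v
      rw [hre]
      exact hΨc
    exact hcont_on.continuousAt (hVo.mem_nhds hf₀V)
  refine ⟨{ toEquiv := E, continuous_toFun := hFc, continuous_invFun := hIc }, ?_⟩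
  intro g z x
  show PCCM.phi ((2 * π) • g.1) z x = z * Circle.exp (2 * Real.pi * g.1 x)
  rw [PCCM.phi_apply, ContinuousMap.smul_apply, smul_eq_mul]
end
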